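/- arXiv:2303.11452 — 8 statements merged into one kernel-verified Lean document; each statement's English description precedes it below -/
import Mathlib

section
/- Let 0 < μ ≤ 1/2 and assume there exists a set S ⊆ V with μ·Vol(G) ≤ Vol(S) ≤ (1−μ)·Vol(G). Then 2·φ_μ(G) ≥ λ_μ(G) ≥ (1/2)·max{ min{ ((μ/(1−μ))·φ_μ(G))², ((μ²·φ_μ(G) + (1−2μ)·φ_0(G))/(1−μ−μ²))² }, φ_0(G)² }. -/
open Finset


private lemma abs_posneg (a b : ℝ) :
    |a - b| = |max a 0 - max b 0| + |max (-a) 0 - max (-b) 0| := by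
  rcases le_total a 0 with ha | ha <;> rcases le_total b 0 with hb | hb
  · rw [max_eq_right ha, max_eq_right hb, max_eq_left (by linarith), max_eq_left (by linarith)]
    rw [show -a - -b = -(a-b) by ring, abs_neg]; simp
  · rw [max_eq_right ha, max_eq_left hb, max_eq_left (by linarith), max_eq_right (by linarith)]
    rw [abs_of_nonpos (by linarith), abs_of_nonpos (by linarith), abs_of_nonneg (by linarith)]
    ring
  · rw [max_eq_left ha, max_eq_right hb, max_eq_right (by linarith), max_eq_left (by linarith)]
    rw [abs_of_nonneg (by linarith), abs_of_nonneg (by linarith), abs_of_nonpos (by linarith)]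
    ring
  · rw [max_eq_left ha, max_eq_left hb, max_eq_right (by linarith), max_eq_right (by linarith)]
    simp

private lemma add_sq_le_two (a b : ℝ) : (a + b)^2 ≤ 2*a^2 + 2*b^2 := by
  nlinarith [sq_nonneg (a - b)]

private lemma abs_sq_le (a b : ℝ) : abs (a*|a| - b*|b|) ≤ |a - b| * (|a| + |b|) := by
  rcases le_total 0 a with ha | ha <;> rcases le_total 0 b with hb | hb
  · rw [abs_of_nonneg ha, abs_of_nonneg hb]
    rcases le_total a b with h | h
    · rw [abs_of_nonpos (by nlinarith), abs_of_nonpos (by linarith)]; nlinarith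
    · rw [abs_of_nonneg (by nlinarith), abs_of_nonneg (by linarith)]; nlinarith
  · rw [abs_of_nonneg ha, abs_of_nonpos hb, abs_of_nonneg (by nlinarith),
      abs_of_nonneg (by linarith)]; nlinarith
  · rw [abs_of_nonpos ha, abs_of_nonneg hb, abs_of_nonpos (by nlinarith),
      abs_of_nonpos (by linarith)]; nlinarith
  · rw [abs_of_nonpos ha, abs_of_nonpos hb]
    rcases le_total a b with h | h
    · rw [abs_of_nonpos (by nlinarith), abs_of_nonpos (by linarith)]; nlinarith
    · rw [abs_of_nonneg (by nlinarith), abs_of_nonneg (by linarith)]; nlinarith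

private lemma median_exists {V : Type*} [Fintype V] [DecidableEq V] [Nonempty V]
    (d : V → ℝ) (hd : ∀ v, 0 ≤ d v) (x : V → ℝ) :
    ∃ c : ℝ, (∑ v ∈ univ.filter (fun v => c < x v), d v) ≤ (∑ v, d v)/2 ∧
             (∑ v ∈ univ.filter (fun v => x v < c), d v) ≤ (∑ v, d v)/2 := by
  classical
  have hVol0 : (0:ℝ) ≤ ∑ v, d v := Finset.sum_nonneg fun v _ => hd v
  have hIne : (univ.image x).Nonempty := by simp [Finset.image_nonempty]
  have hBne : ((univ.image x).filter
      (fun b => (∑ v, d v)/2 ≤ ∑ v ∈ univ.filter (fun v => x v ≤ b), d v)).Nonempty := by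
    refine ⟨(univ.image x).max' hIne, mem_filter.mpr ⟨(univ.image x).max'_mem hIne, ?_⟩⟩
    have h1 : univ.filter (fun v => x v ≤ (univ.image x).max' hIne) = univ :=
      Finset.filter_true_of_mem fun v _ =>
        (univ.image x).le_max' (x v) (mem_image.mpr ⟨v, mem_univ v, rfl⟩)
    rw [h1]; linarith
  obtain ⟨c, hcmem, hcmin⟩ := Finset.exists_min_image _ id hBne
  rw [mem_filter] at hcmem
  refine ⟨c, ?_, ?_⟩
  · have hpart : (∑ v ∈ univ.filter (fun v => x v ≤ c), d v)
        + (∑ v ∈ univ.filter (fun v => c < x v), d v) = ∑ v, d v := by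
      rw [← Finset.sum_filter_add_sum_filter_not univ (fun v => x v ≤ c) d]
      congr 1
      apply Finset.sum_congr _ (fun _ _ => rfl)
      apply Finset.filter_congr
      intro v _; simp [not_le]
    linarith [hcmem.2]
  · by_contra hcon
    push_neg at hcon
    have hne : (univ.filter (fun v => x v < c)).Nonempty := by
      rcases Finset.eq_empty_or_nonempty (univ.filter (fun v => x v < c)) with h | h
      · rw [h] at hcon; simp at hcon; linarith
      · exact h
    have hJne : ((univ.filter (fun v => x v < c)).image x).Nonempty := hne.image x
    obtain ⟨vb, hvb, hvbmax⟩ := Finset.exists_max_image _ x hne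
    set b := x vb with hbdef
    rw [mem_filter] at hvb
    have hbc : b < c := hvb.2
    have hbB : b ∈ (univ.image x).filter
        (fun b => (∑ v, d v)/2 ≤ ∑ v ∈ univ.filter (fun v => x v ≤ b), d v) := by
      rw [mem_filter]
      refine ⟨mem_image.mpr ⟨vb, mem_univ vb, rfl⟩, ?_⟩
      have hsub : univ.filter (fun v => x v < c) ⊆ univ.filter (fun v => x v ≤ b) := by
        intro v hv
        rw [mem_filter] at hv ⊢
        exact ⟨hv.1, hvbmax v (mem_filter.mpr ⟨hv.1, hv.2⟩)⟩
      have := Finset.sum_le_sum_of_subset_of_nonneg hsub (fun v _ _ => hd v)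
      linarith
    have := hcmin b hbB
    simp only [id] at this
    linarith

private lemma double_split {V : Type*} [Fintype V] [DecidableEq V] (S : Finset V)
    (F : V → V → ℝ) :
    ∑ u, ∑ v, F u v = ((∑ u ∈ S, ∑ v ∈ S, F u v) + ∑ u ∈ S, ∑ v ∈ Sᶜ, F u v)
      + ((∑ u ∈ Sᶜ, ∑ v ∈ S, F u v) + ∑ u ∈ Sᶜ, ∑ v ∈ Sᶜ, F u v) := by
  rw [← Finset.sum_add_sum_compl S (fun u => ∑ v, F u v)]
  congr 1 <;> rw [← Finset.sum_add_distrib] <;>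
    exact Finset.sum_congr rfl fun u _ => (Finset.sum_add_sum_compl S (F u)).symm

private lemma sweep {V : Type*} [Fintype V] [DecidableEq V] [Nonempty V]
    (w : V → V → ℝ) (d : V → ℝ) (p0 : ℝ)
    (hw : ∀ u v, 0 ≤ w u v) (hsymm : ∀ u v, w u v = w v u) :
    ∀ (n : ℕ) (g : V → ℝ), (univ.image g).card ≤ n → (∀ v, 0 ≤ g v) →
      (∀ t : ℝ, 0 ≤ t →
        p0 * (∑ v ∈ univ.filter (fun v => t < g v), d v) ≤
          ∑ u ∈ univ.filter (fun v => t < g v), ∑ v ∈ (univ.filter (fun v => t < g v))ᶜ, w u v) →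
      p0 * (∑ v, d v * g v) ≤ (1/2) * ∑ u, ∑ v, w u v * |g u - g v| := by
  intro n
  induction n with
  | zero =>
    intro g hcard _ _
    exfalso
    have : (univ.image g).Nonempty := by simp [Finset.image_nonempty]
    have := Finset.card_pos.mpr this
    omega
  | succ n ih =>
    intro g hcard hg H
    have hIne : (univ.image g).Nonempty := by simp [Finset.image_nonempty]
    obtain ⟨v0, -, hv0⟩ := mem_image.mp ((univ.image g).min'_mem hIne)
    set a := (univ.image g).min' hIne with hadef
    have hga : ∀ v, a ≤ g v := fun v =>
      (univ.image g).min'_le (g v) (mem_image.mpr ⟨v, mem_univ v, rfl⟩)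
    have ha0 : 0 ≤ a := hv0 ▸ hg v0
    have hRHS0 : 0 ≤ (1/2) * ∑ u, ∑ v, w u v * |g u - g v| := by
      apply mul_nonneg (by norm_num)
      exact Finset.sum_nonneg fun u _ => Finset.sum_nonneg fun v _ =>
        mul_nonneg (hw u v) (abs_nonneg _)
    by_cases hS : (univ.filter (fun v => a < g v)).Nonempty
    · -- main case
      obtain ⟨vb, hvb, hvbmin⟩ := Finset.exists_min_image _ g hS
      set S := univ.filter (fun v => a < g v) with hSdef
      set b := g vb with hbdef
      have hab : a < b := (mem_filter.mp hvb).2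
      have hbS : ∀ v ∈ S, b ≤ g v := hvbmin
      have hnotS : ∀ v, v ∉ S → g v = a := by
        intro v hv
        rw [hSdef, mem_filter] at hv
        push_neg at hv
        exact le_antisymm (hv (mem_univ v)) (hga v)
      set g' : V → ℝ := fun v => if a < g v then g v - (b - a) else g v with hg'def
      have hg'S : ∀ v ∈ S, g' v = g v - (b - a) := by
        intro v hv; rw [hSdef, mem_filter] at hv; simp [hg'def, hv.2]
      have hg'notS : ∀ v, v ∉ S → g' v = a := by
        intro v hv
        have h1 := hnotS v hv
        simp [hg'def, h1]
      have hg'a : ∀ v, a ≤ g' v := by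
        intro v
        by_cases hv : v ∈ S
        · rw [hg'S v hv]; have := hbS v hv; linarith
        · rw [hg'notS v hv]
      have hg'0 : ∀ v, 0 ≤ g' v := fun v => le_trans ha0 (hg'a v)
      -- cut symmetry
      have hcross : (∑ u ∈ Sᶜ, ∑ v ∈ S, w u v) = ∑ u ∈ S, ∑ v ∈ Sᶜ, w u v := by
        rw [Finset.sum_comm]
        exact Finset.sum_congr rfl fun u _ => Finset.sum_congr rfl fun v _ => hsymm v u
      -- sum of d g
      have hD : (∑ v, d v * g v) = (∑ v, d v * g' v) + (b - a) * ∑ v ∈ S, d v := by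
        have h1 : ∀ v : V, d v * g v = d v * g' v + (if v ∈ S then (b-a) * d v else 0) := by
          intro v
          by_cases hv : v ∈ S
          · rw [hg'S v hv, if_pos hv]; ring
          · rw [hg'notS v hv, hnotS v hv, if_neg hv]; ring
        rw [Finset.sum_congr rfl fun v _ => h1 v, Finset.sum_add_distrib]
        congr 1
        rw [Finset.sum_ite_mem, Finset.univ_inter, Finset.mul_sum]
      -- quadratic-form sum identity
      have hT : (∑ u, ∑ v, w u v * |g u - g v|)
          = (∑ u, ∑ v, w u v * |g' u - g' v|)
            + ((b - a) * ∑ u ∈ S, ∑ v ∈ Sᶜ, w u v)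
            + ((b - a) * ∑ u ∈ S, ∑ v ∈ Sᶜ, w u v) := by
        rw [double_split S (fun u v => w u v * |g u - g v|),
            double_split S (fun u v => w u v * |g' u - g' v|)]
        have eSS : (∑ u ∈ S, ∑ v ∈ S, w u v * |g u - g v|)
            = ∑ u ∈ S, ∑ v ∈ S, w u v * |g' u - g' v| := by
          refine Finset.sum_congr rfl fun u hu => Finset.sum_congr rfl fun v hv => ?_
          rw [hg'S u hu, hg'S v hv]
          congr 1
          rw [show g u - (b-a) - (g v - (b-a)) = g u - g v by ring]
        have eCC : (∑ u ∈ Sᶜ, ∑ v ∈ Sᶜ, w u v * |g u - g v|)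
            = ∑ u ∈ Sᶜ, ∑ v ∈ Sᶜ, w u v * |g' u - g' v| := by
          refine Finset.sum_congr rfl fun u hu => Finset.sum_congr rfl fun v hv => ?_
          rw [hg'notS u (mem_compl.mp hu), hg'notS v (mem_compl.mp hv),
              hnotS u (mem_compl.mp hu), hnotS v (mem_compl.mp hv)]
        have eSC : (∑ u ∈ S, ∑ v ∈ Sᶜ, w u v * |g u - g v|)
            = (∑ u ∈ S, ∑ v ∈ Sᶜ, w u v * |g' u - g' v|)
              + (b - a) * ∑ u ∈ S, ∑ v ∈ Sᶜ, w u v := by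
          rw [Finset.mul_sum, ← Finset.sum_add_distrib]
          refine Finset.sum_congr rfl fun u hu => ?_
          rw [Finset.mul_sum, ← Finset.sum_add_distrib]
          refine Finset.sum_congr rfl fun v hv => ?_
          have h1 := hnotS v (mem_compl.mp hv)
          have h2 := hbS u hu
          rw [hg'S u hu, hg'notS v (mem_compl.mp hv), h1,
              abs_of_nonneg (by linarith : (0:ℝ) ≤ g u - a),
              abs_of_nonneg (by linarith : (0:ℝ) ≤ g u - (b-a) - a)]
          ring
        have eCS : (∑ u ∈ Sᶜ, ∑ v ∈ S, w u v * |g u - g v|)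
            = (∑ u ∈ Sᶜ, ∑ v ∈ S, w u v * |g' u - g' v|)
              + (b - a) * ∑ u ∈ S, ∑ v ∈ Sᶜ, w u v := by
          rw [← hcross, Finset.mul_sum, ← Finset.sum_add_distrib]
          refine Finset.sum_congr rfl fun u hu => ?_
          rw [Finset.mul_sum, ← Finset.sum_add_distrib]
          refine Finset.sum_congr rfl fun v hv => ?_
          have h1 := hnotS u (mem_compl.mp hu)
          have h2 := hbS v hv
          rw [hg'S v hv, hg'notS u (mem_compl.mp hu), h1,
              abs_of_nonpos (by linarith : a - g v ≤ 0),
              abs_of_nonpos (by linarith : a - (g v - (b-a)) ≤ 0)]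
          ring
        rw [eSS, eCC, eSC, eCS]
        ring
      -- card bound
      have hcard' : (univ.image g').card ≤ n := by
        have hbmem : b ∈ (univ.image g).erase a :=
          mem_erase.mpr ⟨ne_of_gt hab, mem_image.mpr ⟨vb, mem_univ _, rfl⟩⟩
        have hsub : univ.image g' ⊆
            insert a ((((univ.image g).erase a).erase b).image (fun t => t - (b - a))) := by
          intro t ht
          obtain ⟨v, -, rfl⟩ := mem_image.mp ht
          by_cases hv : a < g v
          · by_cases hvb2 : g v = b
            · have hgv : g' v = a := by
                show (if a < g v then g v - (b - a) else g v) = a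
                rw [if_pos hv, hvb2]; ring
              rw [hgv]; exact mem_insert_self _ _
            · refine mem_insert_of_mem (mem_image.mpr ⟨g v, ?_, ?_⟩)
              · exact mem_erase.mpr ⟨hvb2, mem_erase.mpr ⟨ne_of_gt hv,
                  mem_image.mpr ⟨v, mem_univ v, rfl⟩⟩⟩
              · show g v - (b - a) = (if a < g v then g v - (b - a) else g v)
                rw [if_pos hv]
          · have hgv : g' v = a := by
              show (if a < g v then g v - (b - a) else g v) = a
              rw [if_neg hv]
              exact le_antisymm (not_lt.mp hv) (hga v)
            rw [hgv]; exact mem_insert_self _ _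
        have h1 := Finset.card_le_card hsub
        have h2 := Finset.card_insert_le a
          ((((univ.image g).erase a).erase b).image (fun t => t - (b - a)))
        have h3 := Finset.card_image_le (s := ((univ.image g).erase a).erase b)
          (f := fun t => t - (b - a))
        have h4 : (((univ.image g).erase a).erase b).card = (univ.image g).card - 2 := by
          rw [Finset.card_erase_of_mem hbmem,
            Finset.card_erase_of_mem ((univ.image g).min'_mem hIne)]
          omega
        have h5 : 2 ≤ (univ.image g).card := by
          apply Finset.one_lt_card.mpr
          exact ⟨a, (univ.image g).min'_mem hIne, b, mem_of_mem_erase hbmem, ne_of_lt hab⟩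
        omega
      -- new hypothesis
      have H' : ∀ t : ℝ, 0 ≤ t →
          p0 * (∑ v ∈ univ.filter (fun v => t < g' v), d v) ≤
            ∑ u ∈ univ.filter (fun v => t < g' v), ∑ v ∈ (univ.filter (fun v => t < g' v))ᶜ, w u v := by
        intro t ht
        rcases lt_or_ge t a with hta | hta
        · have heq : univ.filter (fun v => t < g' v) = univ.filter (fun v => t < g v) := by
            apply Finset.filter_congr
            intro v _
            constructor
            · intro _; exact lt_of_lt_of_le hta (hga v)
            · intro _; exact lt_of_lt_of_le hta (hg'a v)
          rw [heq]; exact H t ht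
        · have heq : univ.filter (fun v => t < g' v)
              = univ.filter (fun v => t + (b - a) < g v) := by
            apply Finset.filter_congr
            intro v _
            by_cases hv : a < g v
            · rw [show g' v = g v - (b - a) from if_pos hv]
              constructor <;> intro <;> linarith
            · have h1 : g v = a := le_antisymm (not_lt.mp hv) (hga v)
              rw [show g' v = g v from if_neg hv, h1]
              constructor <;> intro <;> linarith
          rw [heq]; exact H (t + (b - a)) (by linarith)
      -- put it together
      have Hb := H a ha0
      rw [← hSdef] at Hb
      calc p0 * (∑ v, d v * g v)
          = p0 * (∑ v, d v * g' v) + (b - a) * (p0 * ∑ v ∈ S, d v) := by rw [hD]; ring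
        _ ≤ (1/2) * (∑ u, ∑ v, w u v * |g' u - g' v|)
            + (b - a) * (∑ u ∈ S, ∑ v ∈ Sᶜ, w u v) := by
            apply add_le_add (ih g' hcard' hg'0 H')
            exact mul_le_mul_of_nonneg_left Hb (by linarith)
        _ = (1/2) * ∑ u, ∑ v, w u v * |g u - g v| := by rw [hT]; ring
    · -- constant case: g ≡ a
      rw [Finset.not_nonempty_iff_eq_empty, Finset.filter_eq_empty_iff] at hS
      have hconst : ∀ v, g v = a := fun v =>
        le_antisymm (not_lt.mp (hS (mem_univ v))) (hga v)
      rcases eq_or_lt_of_le ha0 with haz | hapos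
      · have : ∀ v, d v * g v = 0 := by intro v; rw [hconst v, ← haz, mul_zero]
        rw [Finset.sum_congr rfl fun v _ => this v]
        simpa using hRHS0
      · have hH := H (a/2) (by linarith)
        have hfil : univ.filter (fun v => a/2 < g v) = univ :=
          Finset.filter_true_of_mem fun v _ => lt_of_lt_of_le (by linarith) (hga v)
        rw [hfil, compl_univ] at hH
        simp only [Finset.sum_empty] at hH
        have hsum : (∑ v, d v * g v) = a * ∑ v, d v := by
          rw [Finset.mul_sum]
          exact Finset.sum_congr rfl fun v _ => by rw [hconst v]; ring
        rw [hsum]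
        calc p0 * (a * ∑ v, d v) = a * (p0 * ∑ v, d v) := by ring
          _ ≤ a * 0 := by
              apply mul_le_mul_of_nonneg_left _ (le_of_lt hapos)
              simpa using hH
          _ ≤ _ := by simpa using hRHS0


set_option maxHeartbeats 1000000 in
theorem mu_conductance_cheeger {V : Type*} [Fintype V] [DecidableEq V] [Nonempty V]
    (w : V → V → ℝ)
    (hw_symm : ∀ u v, w u v = w v u)
    (hw_nonneg : ∀ u v, 0 ≤ w u v)
    (hw_loop : ∀ v, w v v = 0)
    (d : V → ℝ) (hd : ∀ v, d v = ∑ u, w v u)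
    (hd_pos : ∀ v, 0 < d v)
    (vol : Finset V → ℝ) (hvol : ∀ S : Finset V, vol S = ∑ v ∈ S, d v)
    (cut : Finset V → ℝ) (hcut : ∀ S : Finset V, cut S = ∑ u ∈ S, ∑ v ∈ Sᶜ, w u v)
    (phi : Finset V → ℝ) (hphi : ∀ S : Finset V, phi S = cut S / min (vol S) (vol Sᶜ))
    (QL QD : (V → ℝ) → ℝ)
    (hQL : ∀ x : V → ℝ, QL x = (1/2) * ∑ u, ∑ v, w u v * (x u - x v)^2)
    (hQD : ∀ x : V → ℝ, QD x = ∑ v, d v * x v ^ 2)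
    (μ : ℝ) (hμ0 : 0 < μ) (hμhalf : μ ≤ 1/2)
    (phi0 : ℝ)
    (hphi0 : IsLeast {y : ℝ | ∃ S : Finset V, S.Nonempty ∧ S ≠ Finset.univ ∧ y = phi S} phi0)
    (phimu : ℝ)
    (hphimu : IsLeast {y : ℝ | ∃ S : Finset V,
        μ * vol Finset.univ ≤ vol S ∧ vol S ≤ (1 - μ) * vol Finset.univ ∧ y = phi S} phimu)
    (lam : ℝ)
    (hlam : IsGLB {y : ℝ | ∃ x : V → ℝ,
        (∑ v, d v * x v) = 0 ∧ QD x = 1 ∧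
        (∀ v, Real.sqrt (μ / ((1 - μ) * vol Finset.univ)) ≤ |x v| ∧
              |x v| ≤ Real.sqrt ((1 - μ) / (μ * vol Finset.univ))) ∧ y = QL x} lam)
    :
    2 * phimu ≥ lam ∧
    lam ≥ (1/2) * max
      (min ((μ / (1 - μ) * phimu)^2)
           (((μ^2 * phimu + (1 - 2*μ) * phi0) / (1 - μ - μ^2))^2))
      (phi0^2) := by
  classical
  have h1μ : 0 < 1 - μ := by linarith
  have hVolpos : 0 < vol univ := by
    rw [hvol]
    exact Finset.sum_pos (fun v _ => hd_pos v) univ_nonempty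
  have hvol_nonneg : ∀ S : Finset V, 0 ≤ vol S := fun S => by
    rw [hvol]; exact Finset.sum_nonneg fun v _ => (hd_pos v).le
  have hvol_compl : ∀ S : Finset V, vol Sᶜ = vol univ - vol S := fun S => by
    rw [hvol, hvol, hvol, ← Finset.sum_add_sum_compl S d]; ring
  have hvol_pos : ∀ S : Finset V, S.Nonempty → 0 < vol S := fun S hS => by
    rw [hvol]; exact Finset.sum_pos (fun v _ => hd_pos v) hS
  have hcut_nonneg : ∀ S : Finset V, 0 ≤ cut S := fun S => by
    rw [hcut]
    exact Finset.sum_nonneg fun u _ => Finset.sum_nonneg fun v _ => hw_nonneg u v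
  have hcut_le : ∀ S : Finset V, cut S ≤ vol S := fun S => by
    rw [hcut, hvol]
    refine Finset.sum_le_sum fun u _ => ?_
    rw [hd]
    exact Finset.sum_le_sum_of_subset_of_nonneg (Finset.subset_univ _)
      (fun v _ _ => hw_nonneg u v)
  have hcut_symm : ∀ S : Finset V, (∑ u ∈ Sᶜ, ∑ v ∈ S, w u v) = cut S := fun S => by
    rw [hcut, Finset.sum_comm]
    exact Finset.sum_congr rfl fun u _ => Finset.sum_congr rfl fun v _ => hw_symm v u
  have hcut_le' : ∀ S : Finset V, cut S ≤ vol Sᶜ := fun S => by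
    rw [← hcut_symm S, hvol]
    refine Finset.sum_le_sum fun u _ => ?_
    rw [hd]
    exact Finset.sum_le_sum_of_subset_of_nonneg (Finset.subset_univ _)
      (fun v _ _ => hw_nonneg u v)
  have hμVolpos : 0 < μ * vol univ := mul_pos hμ0 hVolpos
  have hphi0_nonneg : 0 ≤ phi0 := by
    obtain ⟨S, hne, hnu, hEq⟩ := hphi0.1
    rw [hEq, hphi]
    exact div_nonneg (hcut_nonneg S) (le_min (hvol_nonneg S) (hvol_nonneg Sᶜ))
  have hminmu : ∀ S : Finset V, μ * vol univ ≤ vol S → vol S ≤ (1 - μ) * vol univ →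
      μ * vol univ ≤ min (vol S) (vol Sᶜ) := by
    intro S h1 h2
    refine le_min h1 ?_
    rw [hvol_compl]
    nlinarith
  have hphimu_nonneg : 0 ≤ phimu := by
    obtain ⟨S, h1, h2, hEq⟩ := hphimu.1
    rw [hEq, hphi]
    exact div_nonneg (hcut_nonneg S) (le_min (hvol_nonneg S) (hvol_nonneg Sᶜ))
  have hphimu_le_one : phimu ≤ 1 := by
    obtain ⟨S, h1, h2, hEq⟩ := hphimu.1
    rw [hEq, hphi]
    rw [div_le_one (lt_of_lt_of_le hμVolpos (hminmu S h1 h2))]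
    exact le_min (hcut_le S) (hcut_le' S)
  have hkey1 : ∀ S : Finset V, vol S ≤ vol univ / 2 → phi0 * vol S ≤ cut S := by
    intro S hhalf
    rcases Finset.eq_empty_or_nonempty S with rfl | hne
    · have : vol (∅ : Finset V) = 0 := by rw [hvol]; simp
      rw [this, mul_zero]
      exact hcut_nonneg _
    · have hnu : S ≠ univ := by
        intro h
        rw [h] at hhalf
        linarith
      have hle := hphi0.2 ⟨S, hne, hnu, rfl⟩
      rw [hphi] at hle
      have hposS := hvol_pos S hne
      have hminS : min (vol S) (vol Sᶜ) = vol S := by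
        apply min_eq_left
        rw [hvol_compl]
        linarith
      rw [hminS] at hle
      exact (le_div_iff₀ hposS).mp hle
  have hkey2 : ∀ S : Finset V, μ * vol univ ≤ vol S → vol S ≤ (1 - μ) * vol univ →
      phimu * (μ * vol univ) ≤ cut S := by
    intro S h1 h2
    have hle := hphimu.2 ⟨S, h1, h2, rfl⟩
    rw [hphi] at hle
    have hminpos : 0 < min (vol S) (vol Sᶜ) := lt_of_lt_of_le hμVolpos (hminmu S h1 h2)
    calc phimu * (μ * vol univ) ≤ phimu * min (vol S) (vol Sᶜ) :=
          mul_le_mul_of_nonneg_left (hminmu S h1 h2) hphimu_nonneg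
      _ ≤ cut S := (le_div_iff₀ hminpos).mp hle
  constructor
  · -- easy direction : lam ≤ 2 phimu
    obtain ⟨S0, hS0l, hS0r, hS0eq⟩ := hphimu.1
    have hvSpos : 0 < vol S0 := lt_of_lt_of_le hμVolpos hS0l
    have hvT : vol S0ᶜ = vol univ - vol S0 := hvol_compl S0
    have hvTpos : 0 < vol S0ᶜ := by rw [hvT]; nlinarith
    set vS := vol S0 with hvSdef
    set vT := vol S0ᶜ with hvTdef
    have hU : vol univ = vS + vT := by rw [hvT]; ring
    set aa := Real.sqrt (vT / (vS * vol univ)) with haadef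
    set bb := Real.sqrt (vS / (vT * vol univ)) with hbbdef
    have ha2 : aa^2 = vT / (vS * vol univ) := Real.sq_sqrt (by positivity)
    have hb2 : bb^2 = vS / (vT * vol univ) := Real.sq_sqrt (by positivity)
    have haa0 : 0 ≤ aa := Real.sqrt_nonneg _
    have hbb0 : 0 ≤ bb := Real.sqrt_nonneg _
    have hab : aa * bb = 1 / vol univ := by
      rw [haadef, hbbdef, ← Real.sqrt_mul (by positivity),
        show vT / (vS * vol univ) * (vS / (vT * vol univ)) = (1 / vol univ)^2 by
          field_simp]
      exact Real.sqrt_sq (by positivity)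
    set x : V → ℝ := fun v => if v ∈ S0 then aa else -bb with hxdef
    have hxS : ∀ v ∈ S0, x v = aa := fun v hv => if_pos hv
    have hxC : ∀ v ∈ S0ᶜ, x v = -bb := fun v hv => if_neg (mem_compl.mp hv)
    have hvSaa : vS * aa = vT * bb := by
      have e1 : vS * aa = Real.sqrt (vS^2 * (vT / (vS * vol univ))) := by
        rw [Real.sqrt_mul (sq_nonneg _), Real.sqrt_sq hvSpos.le]
      have e2 : vT * bb = Real.sqrt (vT^2 * (vS / (vT * vol univ))) := by
        rw [Real.sqrt_mul (sq_nonneg _), Real.sqrt_sq hvTpos.le]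
      rw [e1, e2]
      congr 1
      field_simp
    have hsum0 : (∑ v, d v * x v) = 0 := by
      rw [← Finset.sum_add_sum_compl S0 (fun v => d v * x v)]
      have e1 : (∑ v ∈ S0, d v * x v) = vS * aa := by
        rw [hvSdef, hvol, Finset.sum_mul]
        exact Finset.sum_congr rfl fun v hv => by rw [hxS v hv]
      have e2 : (∑ v ∈ S0ᶜ, d v * x v) = -(vT * bb) := by
        have h1 : (∑ v ∈ S0ᶜ, d v * x v) = ∑ v ∈ S0ᶜ, -(d v * bb) :=
          Finset.sum_congr rfl fun v hv => by rw [hxC v hv]; ring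
        rw [h1, Finset.sum_neg_distrib, ← Finset.sum_mul, ← hvol, ← hvTdef]
      rw [e1, e2, hvSaa]
      ring
    have hQDx : QD x = 1 := by
      rw [hQD, ← Finset.sum_add_sum_compl S0 (fun v => d v * x v ^ 2)]
      have e1 : (∑ v ∈ S0, d v * x v ^ 2) = vS * (vT / (vS * vol univ)) := by
        have h1 : (∑ v ∈ S0, d v * x v ^ 2) = (∑ v ∈ S0, d v) * (vT / (vS * vol univ)) := by
          rw [Finset.sum_mul]
          exact Finset.sum_congr rfl fun v hv => by rw [hxS v hv, ha2]
        rw [h1, ← hvol, ← hvSdef]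
      have e2 : (∑ v ∈ S0ᶜ, d v * x v ^ 2) = vT * (vS / (vT * vol univ)) := by
        have h1 : (∑ v ∈ S0ᶜ, d v * x v ^ 2) = (∑ v ∈ S0ᶜ, d v) * (vS / (vT * vol univ)) := by
          rw [Finset.sum_mul]
          refine Finset.sum_congr rfl fun v hv => ?_
          rw [hxC v hv, show (-bb)^2 = bb^2 by ring, hb2]
        rw [h1, ← hvol, ← hvTdef]
      rw [e1, e2, hU]
      field_simp
      ring
    have hb1 : μ * vS ≤ (1 - μ) * vT := by nlinarith
    have hb2' : μ * vT ≤ (1 - μ) * vS := by nlinarith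
    have key_a_low : μ / ((1 - μ) * vol univ) ≤ vT / (vS * vol univ) := by
      rw [div_le_div_iff₀ (mul_pos h1μ hVolpos) (mul_pos hvSpos hVolpos)]
      nlinarith [mul_le_mul_of_nonneg_right hb1 hVolpos.le]
    have key_a_high : vT / (vS * vol univ) ≤ (1 - μ) / (μ * vol univ) := by
      rw [div_le_div_iff₀ (mul_pos hvSpos hVolpos) (mul_pos hμ0 hVolpos)]
      nlinarith [mul_le_mul_of_nonneg_right hb2' hVolpos.le]
    have key_b_low : μ / ((1 - μ) * vol univ) ≤ vS / (vT * vol univ) := by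
      rw [div_le_div_iff₀ (mul_pos h1μ hVolpos) (mul_pos hvTpos hVolpos)]
      nlinarith [mul_le_mul_of_nonneg_right hb2' hVolpos.le]
    have key_b_high : vS / (vT * vol univ) ≤ (1 - μ) / (μ * vol univ) := by
      rw [div_le_div_iff₀ (mul_pos hvTpos hVolpos) (mul_pos hμ0 hVolpos)]
      nlinarith [mul_le_mul_of_nonneg_right hb1 hVolpos.le]
    have hbounds : ∀ v, Real.sqrt (μ / ((1 - μ) * vol univ)) ≤ |x v| ∧
        |x v| ≤ Real.sqrt ((1 - μ) / (μ * vol univ)) := by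
      intro v
      by_cases hv : v ∈ S0
      · rw [hxS v hv, abs_of_nonneg haa0]
        exact ⟨Real.sqrt_le_sqrt key_a_low, Real.sqrt_le_sqrt key_a_high⟩
      · rw [hxC v (mem_compl.mpr hv), abs_neg, abs_of_nonneg hbb0]
        exact ⟨Real.sqrt_le_sqrt key_b_low, Real.sqrt_le_sqrt key_b_high⟩
    have hQLx : QL x = cut S0 * (aa + bb)^2 := by
      rw [hQL, double_split S0 (fun u v => w u v * (x u - x v)^2)]
      have eSS : (∑ u ∈ S0, ∑ v ∈ S0, w u v * (x u - x v)^2) = 0 := by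
        refine Finset.sum_eq_zero fun u hu => Finset.sum_eq_zero fun v hv => ?_
        rw [hxS u hu, hxS v hv]; ring
      have eCC : (∑ u ∈ S0ᶜ, ∑ v ∈ S0ᶜ, w u v * (x u - x v)^2) = 0 := by
        refine Finset.sum_eq_zero fun u hu => Finset.sum_eq_zero fun v hv => ?_
        rw [hxC u hu, hxC v hv]; ring
      have eSC : (∑ u ∈ S0, ∑ v ∈ S0ᶜ, w u v * (x u - x v)^2)
          = (aa + bb)^2 * cut S0 := by
        rw [hcut, Finset.mul_sum]
        refine Finset.sum_congr rfl fun u hu => ?_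
        rw [Finset.mul_sum]
        refine Finset.sum_congr rfl fun v hv => ?_
        rw [hxS u hu, hxC v hv]; ring
      have eCS : (∑ u ∈ S0ᶜ, ∑ v ∈ S0, w u v * (x u - x v)^2)
          = (aa + bb)^2 * cut S0 := by
        rw [← hcut_symm S0, Finset.mul_sum]
        refine Finset.sum_congr rfl fun u hu => ?_
        rw [Finset.mul_sum]
        refine Finset.sum_congr rfl fun v hv => ?_
        rw [hxC u hu, hxS v hv]; ring
      rw [eSS, eCC, eSC, eCS]
      ring
    have happb : (aa + bb)^2 = vol univ / (vS * vT) := by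
      rw [show (aa+bb)^2 = aa^2 + 2*(aa*bb) + bb^2 from by ring, ha2, hb2, hab, hU]
      field_simp
      ring
    have hlamle : lam ≤ QL x := hlam.1 ⟨x, hsum0, hQDx, hbounds, rfl⟩
    have hphiS0 : phimu = cut S0 / min vS vT := by rw [hS0eq, hphi]
    have hQLle : QL x ≤ 2 * phimu := by
      rw [hQLx, happb, hphiS0]
      rcases le_total vS vT with hc | hc
      · rw [min_eq_left hc]
        have h2 : vol univ / (vS * vT) ≤ 2 / vS := by
          rw [div_le_div_iff₀ (mul_pos hvSpos hvTpos) hvSpos]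
          nlinarith [mul_nonneg (sub_nonneg.mpr hc) hvSpos.le]
        calc cut S0 * (vol univ / (vS * vT)) ≤ cut S0 * (2 / vS) :=
              mul_le_mul_of_nonneg_left h2 (hcut_nonneg S0)
          _ = 2 * (cut S0 / vS) := by ring
      · rw [min_eq_right hc]
        have h2 : vol univ / (vS * vT) ≤ 2 / vT := by
          rw [div_le_div_iff₀ (mul_pos hvSpos hvTpos) hvTpos]
          nlinarith [mul_nonneg (sub_nonneg.mpr hc) hvTpos.le]
        calc cut S0 * (vol univ / (vS * vT)) ≤ cut S0 * (2 / vT) :=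
              mul_le_mul_of_nonneg_left h2 (hcut_nonneg S0)
          _ = 2 * (cut S0 / vT) := by ring
    linarith
  · -- hard direction
    rw [ge_iff_le]
    apply hlam.2
    rintro ylam ⟨x, hx0, hxD, hxb, rfl⟩
    set m := Real.sqrt (μ / ((1 - μ) * vol univ)) with hmdef
    set M := Real.sqrt ((1 - μ) / (μ * vol univ)) with hMdef
    have hm2 : m^2 = μ / ((1 - μ) * vol univ) := Real.sq_sqrt (by positivity)
    have hM2 : M^2 = (1 - μ) / (μ * vol univ) := Real.sq_sqrt (by positivity)
    have hm_pos : 0 < m := Real.sqrt_pos.mpr (by positivity)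
    have hM0 : 0 ≤ M := Real.sqrt_nonneg _
    have hmM : (1 - μ) * m = μ * M := by
      have e1 : ((1 - μ) * m)^2 = (μ * M)^2 := by
        rw [mul_pow, mul_pow, hm2, hM2]
        field_simp
      have := congrArg Real.sqrt e1
      rwa [Real.sqrt_sq (by positivity), Real.sqrt_sq (by positivity)] at this
    have hQLnonneg : 0 ≤ QL x := by
      rw [hQL]
      exact mul_nonneg (by norm_num) (Finset.sum_nonneg fun u _ =>
        Finset.sum_nonneg fun v _ => mul_nonneg (hw_nonneg u v) (sq_nonneg _))
    -- ===== branch (a) : (mu/(1-mu) phimu)^2 <= 2 QL x =====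
    set P := univ.filter (fun v => 0 < x v) with hPdef
    have hPx : ∀ v ∈ P, m ≤ x v := by
      intro v hv
      have h1 := (hxb v).1
      rwa [abs_of_pos (mem_filter.mp hv).2] at h1
    have hPxM : ∀ v ∈ P, x v ≤ M := by
      intro v hv
      have h1 := (hxb v).2
      rwa [abs_of_pos (mem_filter.mp hv).2] at h1
    have hCx : ∀ v ∈ Pᶜ, x v ≤ -m := by
      intro v hv
      have h0 : ¬ 0 < x v := fun h => (mem_compl.mp hv) (mem_filter.mpr ⟨mem_univ v, h⟩)
      have h1 := (hxb v).1
      rw [abs_of_nonpos (not_lt.mp h0)] at h1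
      linarith
    have hCxM : ∀ v ∈ Pᶜ, -M ≤ x v := by
      intro v hv
      have h0 : ¬ 0 < x v := fun h => (mem_compl.mp hv) (mem_filter.mpr ⟨mem_univ v, h⟩)
      have h1 := (hxb v).2
      rw [abs_of_nonpos (not_lt.mp h0)] at h1
      linarith
    have hsplitx : (∑ v ∈ P, d v * x v) + (∑ v ∈ Pᶜ, d v * x v) = 0 := by
      rw [Finset.sum_add_sum_compl]
      exact hx0
    have e1 : m * vol P ≤ ∑ v ∈ P, d v * x v := by
      rw [hvol, Finset.mul_sum]
      refine Finset.sum_le_sum fun v hv => ?_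
      rw [mul_comm]
      exact mul_le_mul_of_nonneg_left (hPx v hv) (hd_pos v).le
    have e2 : (∑ v ∈ P, d v * x v) ≤ M * vol P := by
      rw [hvol, Finset.mul_sum]
      refine Finset.sum_le_sum fun v hv => ?_
      rw [mul_comm (M : ℝ) (d v)]
      exact mul_le_mul_of_nonneg_left (hPxM v hv) (hd_pos v).le
    have e3 : m * vol Pᶜ ≤ -∑ v ∈ Pᶜ, d v * x v := by
      rw [hvol, ← Finset.sum_neg_distrib, Finset.mul_sum]
      refine Finset.sum_le_sum fun v hv => ?_
      rw [mul_comm, show -(d v * x v) = d v * (-(x v)) from by ring]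
      exact mul_le_mul_of_nonneg_left (by linarith [hCx v hv]) (hd_pos v).le
    have e4 : (-∑ v ∈ Pᶜ, d v * x v) ≤ M * vol Pᶜ := by
      rw [hvol, ← Finset.sum_neg_distrib, Finset.mul_sum]
      refine Finset.sum_le_sum fun v hv => ?_
      rw [mul_comm (M : ℝ) (d v), show -(d v * x v) = d v * (-(x v)) from by ring]
      exact mul_le_mul_of_nonneg_left (by linarith [hCxM v hv]) (hd_pos v).le
    have echain1 : m * vol Pᶜ ≤ M * vol P := by linarith
    have echain2 : m * vol P ≤ M * vol Pᶜ := by linarith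
    have hcomplP := hvol_compl P
    have hstep1 : μ * vol Pᶜ ≤ (1 - μ) * vol P := by
      have t1 : μ * (m * vol Pᶜ) ≤ μ * (M * vol P) :=
        mul_le_mul_of_nonneg_left echain1 hμ0.le
      have t2 : μ * (M * vol P) = m * ((1 - μ) * vol P) := by
        rw [show μ * (M * vol P) = (μ * M) * vol P from by ring, ← hmM]
        ring
      rw [t2] at t1
      have t3 : m * (μ * vol Pᶜ) ≤ m * ((1 - μ) * vol P) := by
        calc m * (μ * vol Pᶜ) = μ * (m * vol Pᶜ) := by ring
          _ ≤ _ := t1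
      exact le_of_mul_le_mul_left t3 hm_pos
    have hstep2 : μ * vol P ≤ (1 - μ) * vol Pᶜ := by
      have t1 : μ * (m * vol P) ≤ μ * (M * vol Pᶜ) :=
        mul_le_mul_of_nonneg_left echain2 hμ0.le
      have t2 : μ * (M * vol Pᶜ) = m * ((1 - μ) * vol Pᶜ) := by
        rw [show μ * (M * vol Pᶜ) = (μ * M) * vol Pᶜ from by ring, ← hmM]
        ring
      rw [t2] at t1
      have t3 : m * (μ * vol P) ≤ m * ((1 - μ) * vol Pᶜ) := by
        calc m * (μ * vol P) = μ * (m * vol P) := by ring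
          _ ≤ _ := t1
      exact le_of_mul_le_mul_left t3 hm_pos
    rw [hcomplP] at hstep1 hstep2
    have hP1 : μ * vol univ ≤ vol P := by nlinarith
    have hP2 : vol P ≤ (1 - μ) * vol univ := by nlinarith
    have hcutP : phimu * (μ * vol univ) ≤ cut P := hkey2 P hP1 hP2
    have hQLlb : 8 * m^2 * cut P ≤ 2 * QL x := by
      have hexp : 2 * QL x = ∑ u, ∑ v, w u v * (x u - x v)^2 := by rw [hQL]; ring
      rw [hexp, double_split P (fun u v => w u v * (x u - x v)^2)]
      have hSSnn : 0 ≤ ∑ u ∈ P, ∑ v ∈ P, w u v * (x u - x v)^2 :=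
        Finset.sum_nonneg fun u _ => Finset.sum_nonneg fun v _ =>
          mul_nonneg (hw_nonneg u v) (sq_nonneg _)
      have hCCnn : 0 ≤ ∑ u ∈ Pᶜ, ∑ v ∈ Pᶜ, w u v * (x u - x v)^2 :=
        Finset.sum_nonneg fun u _ => Finset.sum_nonneg fun v _ =>
          mul_nonneg (hw_nonneg u v) (sq_nonneg _)
      have hSC : 4 * m^2 * cut P ≤ ∑ u ∈ P, ∑ v ∈ Pᶜ, w u v * (x u - x v)^2 := by
        rw [hcut, Finset.mul_sum]
        refine Finset.sum_le_sum fun u hu => ?_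
        rw [Finset.mul_sum]
        refine Finset.sum_le_sum fun v hv => ?_
        have hd1 : 2 * m ≤ x u - x v := by
          have := hPx u hu
          have := hCx v hv
          linarith
        calc 4 * m^2 * w u v = w u v * (2*m)^2 := by ring
          _ ≤ w u v * (x u - x v)^2 :=
              mul_le_mul_of_nonneg_left
                (pow_le_pow_left₀ (by positivity) hd1 2) (hw_nonneg u v)
      have hCS : 4 * m^2 * cut P ≤ ∑ u ∈ Pᶜ, ∑ v ∈ P, w u v * (x u - x v)^2 := by
        rw [← hcut_symm P, Finset.mul_sum]
        refine Finset.sum_le_sum fun u hu => ?_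
        rw [Finset.mul_sum]
        refine Finset.sum_le_sum fun v hv => ?_
        have hd1 : 2 * m ≤ x v - x u := by
          have := hPx v hv
          have := hCx u hu
          linarith
        calc 4 * m^2 * w u v = w u v * (2*m)^2 := by ring
          _ ≤ w u v * (x v - x u)^2 :=
              mul_le_mul_of_nonneg_left
                (pow_le_pow_left₀ (by positivity) hd1 2) (hw_nonneg u v)
          _ = w u v * (x u - x v)^2 := by ring
      linarith
    have h2a : (μ / (1 - μ) * phimu)^2 ≤ 2 * QL x := by
      have hc1 : 8 * m^2 * (phimu * (μ * vol univ)) ≤ 8 * m^2 * cut P :=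
        mul_le_mul_of_nonneg_left hcutP (by positivity)
      have hval : 8 * m^2 * (phimu * (μ * vol univ)) = 8 * μ^2 / (1 - μ) * phimu := by
        rw [hm2]
        field_simp
      have hA : 8 * μ^2 / (1 - μ) * phimu ≤ 2 * QL x := by
        rw [← hval]
        linarith
      have hq2 : (0:ℝ) < (1 - μ)^2 := by positivity
      rw [show (μ / (1 - μ) * phimu)^2 = μ^2 * phimu^2 / (1 - μ)^2 from by
        field_simp]
      rw [div_le_iff₀ hq2]
      have hB : 8 * μ^2 / (1 - μ) * phimu * (1 - μ)^2 = 8 * μ^2 * phimu * (1 - μ) := by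
        field_simp
      have hC : 8 * μ^2 * phimu * (1 - μ) ≤ 2 * QL x * (1 - μ)^2 := by
        rw [← hB]
        exact mul_le_mul_of_nonneg_right hA hq2.le
      have hfinal : μ^2 * phimu^2 ≤ 8 * μ^2 * phimu * (1 - μ) := by
        have hh1 : 0 ≤ μ^2 * phimu := mul_nonneg (sq_nonneg μ) hphimu_nonneg
        have hh2 : (0:ℝ) ≤ 8 * (1 - μ) - phimu := by linarith
        nlinarith [mul_nonneg hh1 hh2]
      linarith
    -- ===== branch (b) : phi0^2 <= 2 QL x =====
    have h2b : phi0^2 ≤ 2 * QL x := by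
      obtain ⟨c, hc1, hc2⟩ := median_exists d (fun v => (hd_pos v).le) x
      set f : V → ℝ := fun v => (x v - c) * |x v - c| with hfdef
      set g1 : V → ℝ := fun v => max (f v) 0 with hg1def
      set g2 : V → ℝ := fun v => max (-(f v)) 0 with hg2def
      have hg1nn : ∀ v, 0 ≤ g1 v := fun v => le_max_right _ _
      have hg2nn : ∀ v, 0 ≤ g2 v := fun v => le_max_right _ _
      have hVhalf : (∑ v, d v) = vol univ := (hvol univ).symm
      -- the sweep hypothesis for g1
      have hH1 : ∀ t : ℝ, 0 ≤ t →
          phi0 * (∑ v ∈ univ.filter (fun v => t < g1 v), d v) ≤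
            ∑ u ∈ univ.filter (fun v => t < g1 v),
              ∑ v ∈ (univ.filter (fun v => t < g1 v))ᶜ, w u v := by
        intro t ht
        have hsub : univ.filter (fun v => t < g1 v) ⊆ univ.filter (fun v => c < x v) := by
          intro v hv
          rw [mem_filter] at hv ⊢
          refine ⟨hv.1, ?_⟩
          have h1 : t < f v := by
            rcases lt_max_iff.mp hv.2 with h | h
            · exact h
            · linarith
          by_contra hcon
          push_neg at hcon
          have : f v ≤ 0 := mul_nonpos_of_nonpos_of_nonneg (by linarith) (abs_nonneg _)
          linarith
        have hlehalf : vol (univ.filter (fun v => t < g1 v)) ≤ vol univ / 2 := by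
          rw [hvol]
          calc (∑ v ∈ univ.filter (fun v => t < g1 v), d v)
              ≤ ∑ v ∈ univ.filter (fun v => c < x v), d v :=
                Finset.sum_le_sum_of_subset_of_nonneg hsub (fun v _ _ => (hd_pos v).le)
            _ ≤ (∑ v, d v) / 2 := hc1
            _ = vol univ / 2 := by rw [hVhalf]
        have := hkey1 _ hlehalf
        rw [hvol, hcut] at this
        exact this
      have hH2 : ∀ t : ℝ, 0 ≤ t →
          phi0 * (∑ v ∈ univ.filter (fun v => t < g2 v), d v) ≤
            ∑ u ∈ univ.filter (fun v => t < g2 v),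
              ∑ v ∈ (univ.filter (fun v => t < g2 v))ᶜ, w u v := by
        intro t ht
        have hsub : univ.filter (fun v => t < g2 v) ⊆ univ.filter (fun v => x v < c) := by
          intro v hv
          rw [mem_filter] at hv ⊢
          refine ⟨hv.1, ?_⟩
          have h1 : t < -(f v) := by
            rcases lt_max_iff.mp hv.2 with h | h
            · exact h
            · linarith
          by_contra hcon
          push_neg at hcon
          have : 0 ≤ f v := mul_nonneg (by linarith) (abs_nonneg _)
          linarith
        have hlehalf : vol (univ.filter (fun v => t < g2 v)) ≤ vol univ / 2 := by
          rw [hvol]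
          calc (∑ v ∈ univ.filter (fun v => t < g2 v), d v)
              ≤ ∑ v ∈ univ.filter (fun v => x v < c), d v :=
                Finset.sum_le_sum_of_subset_of_nonneg hsub (fun v _ _ => (hd_pos v).le)
            _ ≤ (∑ v, d v) / 2 := hc2
            _ = vol univ / 2 := by rw [hVhalf]
        have := hkey1 _ hlehalf
        rw [hvol, hcut] at this
        exact this
      have hs1 := sweep w d phi0 hw_nonneg hw_symm (univ.image g1).card g1 le_rfl hg1nn hH1
      have hs2 := sweep w d phi0 hw_nonneg hw_symm (univ.image g2).card g2 le_rfl hg2nn hH2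
      -- combine
      set Q : ℝ := 1 + c^2 * vol univ with hQdef
      have hQ1 : 1 ≤ Q := by
        have : 0 ≤ c^2 * vol univ := mul_nonneg (sq_nonneg c) hVolpos.le
        rw [hQdef]; linarith
      have hQpos : 0 < Q := by linarith
      have hsumQ : (∑ v, d v * g1 v) + (∑ v, d v * g2 v) = Q := by
        rw [← Finset.sum_add_distrib]
        have hterm : ∀ v, d v * g1 v + d v * g2 v = d v * (x v - c)^2 := by
          intro v
          have hmaxsum : g1 v + g2 v = (x v - c)^2 := by
            have h1 : g1 v = max ((x v - c) * |x v - c|) 0 := rfl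
            have h2 : g2 v = max (-((x v - c) * |x v - c|)) 0 := rfl
            rw [h1, h2]
            rcases le_total 0 (x v - c) with h | h
            · have hf0 : 0 ≤ (x v - c) * |x v - c| := mul_nonneg h (abs_nonneg _)
              rw [max_eq_left hf0, max_eq_right (neg_nonpos.mpr hf0),
                abs_of_nonneg h]
              ring
            · have hf0 : (x v - c) * |x v - c| ≤ 0 :=
                mul_nonpos_of_nonpos_of_nonneg h (abs_nonneg _)
              rw [max_eq_right hf0, max_eq_left (neg_nonneg.mpr hf0),
                abs_of_nonpos h]
              ring
          calc d v * g1 v + d v * g2 v = d v * (g1 v + g2 v) := by ring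
            _ = d v * (x v - c)^2 := by rw [hmaxsum]
        rw [Finset.sum_congr rfl fun v _ => hterm v]
        have hexpand : ∀ v : V, d v * (x v - c)^2
            = d v * x v^2 - 2*c*(d v * x v) + c^2 * d v := fun v => by ring
        rw [Finset.sum_congr rfl fun v _ => hexpand v, Finset.sum_add_distrib,
          Finset.sum_sub_distrib, ← Finset.mul_sum, ← Finset.mul_sum, hx0,
          show (∑ v, d v * x v ^ 2) = 1 from by rw [← hQD x]; exact hxD, hVhalf, hQdef]
        ring
      have hkeysweep : phi0 * Q ≤ (1/2) * ∑ u, ∑ v, w u v * |f u - f v| := by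
        have hcomb : (∑ u, ∑ v, w u v * |g1 u - g1 v|)
            + (∑ u, ∑ v, w u v * |g2 u - g2 v|)
            = ∑ u, ∑ v, w u v * |f u - f v| := by
          rw [← Finset.sum_add_distrib]
          refine Finset.sum_congr rfl fun u _ => ?_
          rw [← Finset.sum_add_distrib]
          refine Finset.sum_congr rfl fun v _ => ?_
          rw [show w u v * |g1 u - g1 v| + w u v * |g2 u - g2 v|
            = w u v * (|g1 u - g1 v| + |g2 u - g2 v|) from by ring]
          congr 1
          exact (abs_posneg (f u) (f v)).symm
        calc phi0 * Q = phi0 * (∑ v, d v * g1 v) + phi0 * (∑ v, d v * g2 v) := by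
              rw [← hsumQ]; ring
          _ ≤ (1/2) * (∑ u, ∑ v, w u v * |g1 u - g1 v|)
              + (1/2) * (∑ u, ∑ v, w u v * |g2 u - g2 v|) := add_le_add hs1 hs2
          _ = (1/2) * ∑ u, ∑ v, w u v * |f u - f v| := by rw [← hcomb]; ring
      -- Cauchy-Schwarz
      have hCS : (∑ u, ∑ v, w u v * |f u - f v|)^2 ≤ (2 * QL x) * (4 * Q) := by
        have step1 : (∑ u, ∑ v, w u v * |f u - f v|)
            ≤ ∑ u, ∑ v, (Real.sqrt (w u v) * |x u - x v|)
                * (Real.sqrt (w u v) * (|x u - c| + |x v - c|)) := by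
          refine Finset.sum_le_sum fun u _ => Finset.sum_le_sum fun v _ => ?_
          have hptw : |f u - f v| ≤ |(x u - c) - (x v - c)| * (|x u - c| + |x v - c|) :=
            abs_sq_le (x u - c) (x v - c)
          have hxx : |(x u - c) - (x v - c)| = |x u - x v| := by
            rw [show (x u - c) - (x v - c) = x u - x v from by ring]
          rw [hxx] at hptw
          calc w u v * |f u - f v| ≤ w u v * (|x u - x v| * (|x u - c| + |x v - c|)) :=
                mul_le_mul_of_nonneg_left hptw (hw_nonneg u v)
            _ = (Real.sqrt (w u v) * |x u - x v|)
                * (Real.sqrt (w u v) * (|x u - c| + |x v - c|)) := by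
                rw [show (Real.sqrt (w u v) * |x u - x v|)
                    * (Real.sqrt (w u v) * (|x u - c| + |x v - c|))
                  = (Real.sqrt (w u v) * Real.sqrt (w u v))
                    * (|x u - x v| * (|x u - c| + |x v - c|)) from by ring,
                  Real.mul_self_sqrt (hw_nonneg u v)]
        have hnn : 0 ≤ ∑ u, ∑ v, w u v * |f u - f v| :=
          Finset.sum_nonneg fun u _ => Finset.sum_nonneg fun v _ =>
            mul_nonneg (hw_nonneg u v) (abs_nonneg _)
        have step2 : (∑ u, ∑ v, (Real.sqrt (w u v) * |x u - x v|)
                * (Real.sqrt (w u v) * (|x u - c| + |x v - c|)))^2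
            ≤ (∑ u, ∑ v, w u v * (x u - x v)^2)
              * (∑ u, ∑ v, w u v * (|x u - c| + |x v - c|)^2) := by
          have hprod := Finset.sum_mul_sq_le_sq_mul_sq (univ ×ˢ univ)
            (fun p => Real.sqrt (w p.1 p.2) * |x p.1 - x p.2|)
            (fun p => Real.sqrt (w p.1 p.2) * (|x p.1 - c| + |x p.2 - c|))
          rw [Finset.sum_product] at hprod
          rw [show (∑ u, ∑ v, w u v * (x u - x v)^2)
              = ∑ u, ∑ v, (Real.sqrt (w u v) * |x u - x v|)^2 from
            Finset.sum_congr rfl fun u _ => Finset.sum_congr rfl fun v _ => by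
              rw [mul_pow, Real.sq_sqrt (hw_nonneg u v), sq_abs]]
          rw [show (∑ u, ∑ v, w u v * (|x u - c| + |x v - c|)^2)
              = ∑ u, ∑ v, (Real.sqrt (w u v) * (|x u - c| + |x v - c|))^2 from
            Finset.sum_congr rfl fun u _ => Finset.sum_congr rfl fun v _ => by
              rw [mul_pow, Real.sq_sqrt (hw_nonneg u v)]]
          rw [← Finset.sum_product' (f := fun u v => (Real.sqrt (w u v) * |x u - x v|)^2),
            ← Finset.sum_product' (f := fun u v =>
              (Real.sqrt (w u v) * (|x u - c| + |x v - c|))^2)]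
          exact hprod
        have step3 : (∑ u, ∑ v, w u v * (x u - x v)^2) = 2 * QL x := by
          rw [hQL]; ring
        have step4 : (∑ u, ∑ v, w u v * (|x u - c| + |x v - c|)^2) ≤ 4 * Q := by
          have hptw : ∀ u v : V, w u v * (|x u - c| + |x v - c|)^2
              ≤ w u v * (2*(x u - c)^2 + 2*(x v - c)^2) := by
            intro u v
            apply mul_le_mul_of_nonneg_left _ (hw_nonneg u v)
            have h1 : (|x u - c| + |x v - c|)^2
                ≤ 2*|x u - c|^2 + 2*|x v - c|^2 := add_sq_le_two _ _
            rw [sq_abs, sq_abs] at h1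
            exact h1
          have hQsum : (∑ v, d v * (x v - c)^2) = Q := by
            have hexpand : ∀ v : V, d v * (x v - c)^2
                = d v * x v^2 - 2*c*(d v * x v) + c^2 * d v := fun v => by ring
            rw [Finset.sum_congr rfl fun v _ => hexpand v, Finset.sum_add_distrib,
              Finset.sum_sub_distrib, ← Finset.mul_sum, ← Finset.mul_sum, hx0,
              show (∑ v, d v * x v ^ 2) = 1 from by rw [← hQD x]; exact hxD, hVhalf, hQdef]
            ring
          calc (∑ u, ∑ v, w u v * (|x u - c| + |x v - c|)^2)
              ≤ ∑ u, ∑ v, w u v * (2*(x u - c)^2 + 2*(x v - c)^2) :=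
                Finset.sum_le_sum fun u _ => Finset.sum_le_sum fun v _ => hptw u v
            _ = (∑ u, ∑ v, 2 * (x u - c)^2 * w u v) + ∑ u, ∑ v, 2 * (x v - c)^2 * w u v := by
                rw [← Finset.sum_add_distrib]
                refine Finset.sum_congr rfl fun u _ => ?_
                rw [← Finset.sum_add_distrib]
                exact Finset.sum_congr rfl fun v _ => by ring
            _ = 4 * Q := by
                have hA : (∑ u, ∑ v, 2 * (x u - c)^2 * w u v) = 2 * ∑ u, d u * (x u - c)^2 := by
                  rw [Finset.mul_sum]
                  refine Finset.sum_congr rfl fun u _ => ?_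
                  rw [← Finset.mul_sum, hd u]
                  ring
                have hB : (∑ u, ∑ v, 2 * (x v - c)^2 * w u v) = 2 * ∑ v, d v * (x v - c)^2 := by
                  rw [Finset.sum_comm, Finset.mul_sum]
                  refine Finset.sum_congr rfl fun v _ => ?_
                  rw [← Finset.mul_sum]
                  rw [show (∑ u, w u v) = d v from by
                    rw [hd v]
                    exact Finset.sum_congr rfl fun u _ => hw_symm u v]
                  ring
                rw [hA, hB, hQsum]
                ring
        calc (∑ u, ∑ v, w u v * |f u - f v|)^2
            ≤ (∑ u, ∑ v, (Real.sqrt (w u v) * |x u - x v|)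
                * (Real.sqrt (w u v) * (|x u - c| + |x v - c|)))^2 := by
              apply pow_le_pow_left₀ hnn step1
          _ ≤ (∑ u, ∑ v, w u v * (x u - x v)^2)
              * (∑ u, ∑ v, w u v * (|x u - c| + |x v - c|)^2) := step2
          _ ≤ (2 * QL x) * (4 * Q) := by
              rw [step3]
              apply mul_le_mul_of_nonneg_left step4 (by linarith)
      -- conclude
      have hT0 : 0 ≤ ∑ u, ∑ v, w u v * |f u - f v| :=
        Finset.sum_nonneg fun u _ => Finset.sum_nonneg fun v _ =>
          mul_nonneg (hw_nonneg u v) (abs_nonneg _)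
      have hsq : (phi0 * Q)^2 ≤ ((1/2) * ∑ u, ∑ v, w u v * |f u - f v|)^2 :=
        pow_le_pow_left₀ (mul_nonneg hphi0_nonneg hQpos.le) hkeysweep 2
      have hsq2 : (phi0 * Q)^2 ≤ 2 * QL x * Q := by
        calc (phi0 * Q)^2 ≤ ((1/2) * ∑ u, ∑ v, w u v * |f u - f v|)^2 := hsq
          _ = (1/4) * (∑ u, ∑ v, w u v * |f u - f v|)^2 := by ring
          _ ≤ (1/4) * ((2 * QL x) * (4 * Q)) :=
              mul_le_mul_of_nonneg_left hCS (by norm_num)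
          _ = 2 * QL x * Q := by ring
      have hdiv : phi0^2 * Q ≤ 2 * QL x := by
        have h1 : (phi0^2 * Q) * Q ≤ (2 * QL x) * Q := by
          calc (phi0^2 * Q) * Q = (phi0 * Q)^2 := by ring
            _ ≤ 2 * QL x * Q := hsq2
        exact le_of_mul_le_mul_right h1 hQpos
      calc phi0^2 ≤ phi0^2 * Q := le_mul_of_one_le_right (sq_nonneg _) hQ1
        _ ≤ 2 * QL x := hdiv
    -- assemble
    have hmax : max (min ((μ / (1 - μ) * phimu)^2)
        (((μ^2 * phimu + (1 - 2*μ) * phi0) / (1 - μ - μ^2))^2)) (phi0^2) ≤ 2 * QL x :=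
      max_le (le_trans (min_le_left _ _) h2a) h2b
    linarith
end

section
/- Let 0 < μ ≤ 1/2 and assume there exists a set S ⊆ V with μ·Vol(G) ≤ Vol(S) ≤ (1−μ)·Vol(G). Then λ_μ(G) ≤ 2·φ_μ(G). -/
open Finset

theorem mu_conductance_cheeger_upper {V : Type*} [Fintype V] [DecidableEq V] [Nonempty V]
    (w : V → V → ℝ)
    (hw_symm : ∀ u v, w u v = w v u)
    (hw_nonneg : ∀ u v, 0 ≤ w u v)
    (hw_loop : ∀ v, w v v = 0)
    (d : V → ℝ) (hd : ∀ v, d v = ∑ u, w v u)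
    (hd_pos : ∀ v, 0 < d v)
    (vol : Finset V → ℝ) (hvol : ∀ S : Finset V, vol S = ∑ v ∈ S, d v)
    (cut : Finset V → ℝ) (hcut : ∀ S : Finset V, cut S = ∑ u ∈ S, ∑ v ∈ Sᶜ, w u v)
    (phi : Finset V → ℝ) (hphi : ∀ S : Finset V, phi S = cut S / min (vol S) (vol Sᶜ))
    (QL QD : (V → ℝ) → ℝ)
    (hQL : ∀ x : V → ℝ, QL x = (1/2) * ∑ u, ∑ v, w u v * (x u - x v)^2)
    (hQD : ∀ x : V → ℝ, QD x = ∑ v, d v * x v ^ 2)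
    (μ : ℝ) (hμ0 : 0 < μ) (hμhalf : μ ≤ 1/2)
    (phimu : ℝ)
    (hphimu : IsLeast {y : ℝ | ∃ S : Finset V,
        μ * vol Finset.univ ≤ vol S ∧ vol S ≤ (1 - μ) * vol Finset.univ ∧ y = phi S} phimu)
    (lam : ℝ)
    (hlam : IsGLB {y : ℝ | ∃ x : V → ℝ,
        (∑ v, d v * x v) = 0 ∧ QD x = 1 ∧
        (∀ v, Real.sqrt (μ / ((1 - μ) * vol Finset.univ)) ≤ |x v| ∧
              |x v| ≤ Real.sqrt ((1 - μ) / (μ * vol Finset.univ))) ∧ y = QL x} lam)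
    :
    lam ≤ 2 * phimu := by
  obtain ⟨⟨S, hS1, hS2, hSphi⟩, -⟩ := hphimu
  set T := vol Finset.univ with hT
  have hTpos : 0 < T := by
    rw [hT, hvol]
    exact Finset.sum_pos (fun v _ => hd_pos v) Finset.univ_nonempty
  have h1μ : 0 < 1 - μ := by linarith
  set s := vol S with hs
  set c := vol Sᶜ with hc
  have hsc : s + c = T := by
    rw [hs, hc, hT, hvol, hvol, hvol]
    exact Finset.sum_add_sum_compl S d
  have hs_pos : 0 < s := lt_of_lt_of_le (by positivity) hS1
  have hc_lb : μ * T ≤ c := by nlinarith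
  have hc_pos : 0 < c := lt_of_lt_of_le (by positivity) hc_lb
  have hc_ub : c ≤ (1 - μ) * T := by nlinarith
  set r := 1 / Real.sqrt (s * c * T) with hr
  have hrsq : r ^ 2 = 1 / (s * c * T) := by
    rw [hr, div_pow, one_pow, Real.sq_sqrt (by positivity)]
  have hr_pos : 0 < r := by
    rw [hr]; positivity
  set x : V → ℝ := fun v => if v ∈ S then c * r else -(s * r) with hx
  -- bounds on |x v|
  have hbound : ∀ v, Real.sqrt (μ / ((1 - μ) * T)) ≤ |x v| ∧
      |x v| ≤ Real.sqrt ((1 - μ) / (μ * T)) := by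
    have key : ∀ a b : ℝ, 0 < a → 0 < b → μ * T ≤ a → a ≤ (1 - μ) * T →
        μ * T ≤ b → b ≤ (1 - μ) * T → a + b = T → a * b = s * c →
        Real.sqrt (μ / ((1 - μ) * T)) ≤ a * r ∧ a * r ≤ Real.sqrt ((1 - μ) / (μ * T)) := by
      intro a b ha hb hal hau hbl hbu hab hab2
      have hmul : s * c * T = a * b * T := by rw [hab2]
      have hsq : (a * r) ^ 2 = a / (b * T) := by
        rw [mul_pow, hrsq, hmul]
        field_simp
      constructor
      · have h1 : μ / ((1 - μ) * T) ≤ (a * r) ^ 2 := by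
          rw [hsq, div_le_div_iff₀ (by positivity) (by positivity)]
          nlinarith
        calc Real.sqrt (μ / ((1 - μ) * T)) ≤ Real.sqrt ((a * r) ^ 2) :=
              Real.sqrt_le_sqrt h1
          _ = a * r := Real.sqrt_sq (by positivity)
      · rw [show a * r = Real.sqrt ((a * r) ^ 2) from (Real.sqrt_sq (by positivity)).symm]
        apply Real.sqrt_le_sqrt
        rw [hsq, div_le_div_iff₀ (by positivity) (by positivity)]
        nlinarith
    intro v
    by_cases hv : v ∈ S
    · have : x v = c * r := by simp [hx, hv]
      rw [this, abs_of_pos (by positivity)]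
      exact key c s hc_pos hs_pos hc_lb hc_ub hS1 hS2 (by linarith) (mul_comm c s)
    · have : x v = -(s * r) := by simp [hx, hv]
      rw [this, abs_neg, abs_of_pos (by positivity)]
      exact key s c hs_pos hc_pos hS1 hS2 hc_lb hc_ub hsc rfl
  -- mean zero
  have hxS : ∀ v ∈ S, x v = c * r := fun v hv => by simp [hx, hv]
  have hxSc : ∀ v ∈ Sᶜ, x v = -(s * r) := fun v hv => by
    simp only [Finset.mem_compl] at hv; simp [hx, hv]
  have hmean : ∑ v, d v * x v = 0 := by
    rw [← Finset.sum_add_sum_compl S]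
    have e1 : ∑ v ∈ S, d v * x v = s * (c * r) := by
      rw [hs, hvol, Finset.sum_mul]
      exact Finset.sum_congr rfl fun v hv => by rw [hxS v hv]
    have e2 : ∑ v ∈ Sᶜ, d v * x v = c * -(s * r) := by
      rw [hc, hvol, Finset.sum_mul]
      exact Finset.sum_congr rfl fun v hv => by rw [hxSc v hv]
    rw [e1, e2]; ring
  -- QD = 1
  have hQDx : QD x = 1 := by
    rw [hQD, ← Finset.sum_add_sum_compl S]
    have e1 : ∑ v ∈ S, d v * x v ^ 2 = s * (c * r) ^ 2 := by
      rw [hs, hvol, Finset.sum_mul]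
      exact Finset.sum_congr rfl fun v hv => by rw [hxS v hv]
    have e2 : ∑ v ∈ Sᶜ, d v * x v ^ 2 = c * (s * r) ^ 2 := by
      rw [hc, hvol, Finset.sum_mul]
      exact Finset.sum_congr rfl fun v hv => by rw [hxSc v hv, neg_sq]
    rw [e1, e2]
    have : s * (c * r) ^ 2 + c * (s * r) ^ 2 = s * c * (s + c) * r ^ 2 := by ring
    rw [this, hsc, hrsq]
    field_simp
  -- QL value
  have hQLx : QL x = cut S * (T * r) ^ 2 := by
    rw [hQL, ← Finset.sum_add_sum_compl S (fun u => ∑ v, w u v * (x u - x v) ^ 2)]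
    have e1 : ∑ u ∈ S, ∑ v, w u v * (x u - x v) ^ 2
        = ∑ u ∈ S, ∑ v ∈ Sᶜ, w u v * (T * r) ^ 2 := by
      refine Finset.sum_congr rfl fun u hu => ?_
      rw [← Finset.sum_add_sum_compl S (fun v => w u v * (x u - x v) ^ 2)]
      have z1 : ∑ v ∈ S, w u v * (x u - x v) ^ 2 = 0 := by
        apply Finset.sum_eq_zero; intro v hv
        rw [hxS u hu, hxS v hv]; ring
      have z2 : ∑ v ∈ Sᶜ, w u v * (x u - x v) ^ 2
          = ∑ v ∈ Sᶜ, w u v * (T * r) ^ 2 := by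
        refine Finset.sum_congr rfl fun v hv => ?_
        rw [hxS u hu, hxSc v hv, show c * r - -(s * r) = (s + c) * r by ring, hsc]
      rw [z1, z2, zero_add]
    have e2 : ∑ u ∈ Sᶜ, ∑ v, w u v * (x u - x v) ^ 2
        = ∑ u ∈ S, ∑ v ∈ Sᶜ, w u v * (T * r) ^ 2 := by
      have : ∑ u ∈ Sᶜ, ∑ v, w u v * (x u - x v) ^ 2
          = ∑ u ∈ Sᶜ, ∑ v ∈ S, w u v * (T * r) ^ 2 := by
        refine Finset.sum_congr rfl fun u hu => ?_
        rw [← Finset.sum_add_sum_compl S (fun v => w u v * (x u - x v) ^ 2)]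
        have z1 : ∑ v ∈ S, w u v * (x u - x v) ^ 2
            = ∑ v ∈ S, w u v * (T * r) ^ 2 := by
          refine Finset.sum_congr rfl fun v hv => ?_
          rw [hxSc u hu, hxS v hv, show -(s * r) - c * r = -((s + c) * r) by ring,
            hsc, neg_sq]
        have z2 : ∑ v ∈ Sᶜ, w u v * (x u - x v) ^ 2 = 0 := by
          apply Finset.sum_eq_zero; intro v hv
          rw [hxSc u hu, hxSc v hv]; ring
        rw [z1, z2, add_zero]
      rw [this, Finset.sum_comm]
      exact Finset.sum_congr rfl fun u _ => Finset.sum_congr rfl fun v _ => by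
        rw [hw_symm]
    rw [e1, e2, hcut]
    simp only [← Finset.sum_mul]
    ring
  -- lam ≤ QL x
  have hlow : lam ≤ QL x := hlam.1 ⟨x, hmean, hQDx, hbound, rfl⟩
  -- QL x ≤ 2 * phi S
  have hcut_nonneg : 0 ≤ cut S := by
    rw [hcut]
    exact Finset.sum_nonneg fun u _ => Finset.sum_nonneg fun v _ => hw_nonneg u v
  have hTr : (T * r) ^ 2 = 1 / s + 1 / c := by
    rw [mul_pow, hrsq, ← hsc]
    field_simp
    ring
  have hmin : 1 / s + 1 / c ≤ 2 / min s c := by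
    rcases le_total s c with h | h
    · rw [min_eq_left h]
      have h1 : 1 / c ≤ 1 / s := one_div_le_one_div_of_le hs_pos h
      have h2 : 2 / s = 1 / s + 1 / s := by ring
      linarith
    · rw [min_eq_right h]
      have h1 : 1 / s ≤ 1 / c := one_div_le_one_div_of_le hc_pos h
      have h2 : 2 / c = 1 / c + 1 / c := by ring
      linarith
  have hQLle : QL x ≤ 2 * phi S := by
    rw [hQLx, hTr, hphi S, ← hs, ← hc]
    have hminpos : 0 < min s c := lt_min hs_pos hc_pos
    calc cut S * (1 / s + 1 / c) ≤ cut S * (2 / min s c) :=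
          mul_le_mul_of_nonneg_left hmin hcut_nonneg
      _ = 2 * (cut S / min s c) := by ring
  rw [hSphi]
  linarith
end

section
/- Let 0 < μ ≤ 1/2 and assume there exists a set S ⊆ V with μ·Vol(G) ≤ Vol(S) ≤ (1−μ)·Vol(G). Then λ_μ(G) ≥ φ_0(G)²/2. -/
open Finset

private lemma fil_le (n i : ℕ) (h : i < n) :
    (Finset.range n).filter (fun j => j ≤ i) = Finset.range (i+1) := by
  ext j; simp only [Finset.mem_filter, Finset.mem_range]; omega

private lemma fil_gt (n i : ℕ) :
    (Finset.range n).filter (fun k => i < k) = Finset.Ico (i+1) n := by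
  ext j; simp only [Finset.mem_filter, Finset.mem_range, Finset.mem_Ico]; omega

private lemma fil_ge (n j : ℕ) :
    (Finset.range n).filter (fun i => j ≤ i) = Finset.Ico j n := by
  ext i; simp only [Finset.mem_filter, Finset.mem_range, Finset.mem_Ico]; omega

private lemma fil_between (n j k : ℕ) (h : k ≤ n) :
    (Finset.range n).filter (fun i => j ≤ i ∧ i < k) = Finset.Ico j k := by
  ext i; simp only [Finset.mem_filter, Finset.mem_range, Finset.mem_Ico]; omega

private lemma tele (b : ℕ → ℝ) (j k : ℕ) (hjk : j ≤ k) :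
    ∑ i ∈ Finset.Ico j k, (b i - b (i+1)) = b j - b k := by
  induction k, hjk using Nat.le_induction with
  | base => simp
  | succ k hk ih => rw [Finset.sum_Ico_succ_top hk, ih]; ring

private lemma sweep_s3 {V : Type*} [Fintype V] [DecidableEq V] [Nonempty V]
    (w : V → V → ℝ) (hw_symm : ∀ u v, w u v = w v u) (hw_nonneg : ∀ u v, 0 ≤ w u v)
    (d : V → ℝ) (hd : ∀ v, d v = ∑ u, w v u) (hd_pos : ∀ v, 0 < d v)
    (phi0 : ℝ) (hphi0_nonneg : 0 ≤ phi0)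
    (hkey : ∀ S : Finset V, S.Nonempty → (∑ v ∈ S, d v) ≤ (∑ v, d v)/2 →
      phi0 * (∑ v ∈ S, d v) ≤ ∑ u ∈ S, ∑ v ∈ Sᶜ, w u v)
    (h : V → ℝ) (hh : ∀ v, 0 ≤ h v)
    (hsupp : (∑ v ∈ Finset.univ.filter (fun v => 0 < h v), d v) ≤ (∑ v, d v)/2) :
    phi0 ^ 2 * (∑ v, d v * h v ^ 2) ≤ ∑ u, ∑ v, w u v * (h u - h v) ^ 2 := by
  classical
  set n := Fintype.card V with hn
  -- sorted equivalence
  obtain ⟨e, he⟩ : ∃ e : Fin n ≃ V, ∀ i j : Fin n, i ≤ j → h (e j) ≤ h (e i) := by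
    set e₀ := (Fintype.equivFin V).symm with he₀
    set f : Fin n → ℝ := fun i => -h (e₀ i) with hf
    refine ⟨(Tuple.sort f).trans e₀, fun i j hij => ?_⟩
    have hmono := Tuple.monotone_sort f hij
    simp only [Function.comp_apply, hf] at hmono
    simp only [Equiv.trans_apply]
    linarith
  set vf : ℕ → V := fun j => if hj : j < n then e ⟨j, hj⟩ else Classical.arbitrary V with hvf
  have hvf_lt : ∀ {j : ℕ} (hj : j < n), vf j = e ⟨j, hj⟩ := by
    intro j hj; simp only [hvf, dif_pos hj]
  have hreindex : ∀ f : V → ℝ, (∑ v, f v) = ∑ j ∈ Finset.range n, f (vf j) := by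
    intro f
    rw [← Fin.sum_univ_eq_sum_range (fun j => f (vf j)) n, ← Equiv.sum_comp e f]
    refine Finset.sum_congr rfl fun i _ => ?_
    rw [hvf_lt i.isLt, Fin.eta]
  have hvf_inj : ∀ {j k : ℕ}, j < n → k < n → vf j = vf k → j = k := by
    intro j k hj hk hjk
    rw [hvf_lt hj, hvf_lt hk] at hjk
    simpa using congrArg Fin.val (e.injective hjk)
  have hvf_anti : ∀ {j k : ℕ}, j ≤ k → k < n → h (vf k) ≤ h (vf j) := by
    intro j k hjk hk
    have hj : j < n := lt_of_le_of_lt (Nat.lt_succ_iff.mp (Nat.lt_succ_of_le hjk)) hk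
    rw [hvf_lt hj, hvf_lt hk]
    exact he _ _ (Fin.mk_le_mk.mpr hjk)
  set b : ℕ → ℝ := fun j => if j < n then h (vf j) ^ 2 else 0 with hb
  have hb_nonneg : ∀ j, 0 ≤ b j := by
    intro j; simp only [hb]; split
    · positivity
    · exact le_refl 0
  have hb_anti : ∀ {j k : ℕ}, j ≤ k → b k ≤ b j := by
    intro j k hjk
    by_cases hk : k < n
    · have hj : j < n := lt_of_le_of_lt hjk hk
      simp only [hb, if_pos hj, if_pos hk]
      have h1 := hvf_anti hjk hk
      have h2 := hh (vf k)
      nlinarith [hh (vf j)]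
    · have : b k = 0 := by simp [hb, hk]
      rw [this]; exact hb_nonneg j
  have hbn : b n = 0 := by simp [hb]
  set D : ℕ → ℝ := fun i => b i - b (i+1) with hD
  have hD_nonneg : ∀ i, 0 ≤ D i := fun i => sub_nonneg.mpr (hb_anti (Nat.le_succ i))
  set S : ℕ → Finset V := fun i => (Finset.range (i+1)).image vf with hS
  have hvolS : ∀ i, i < n → (∑ v ∈ S i, d v) = ∑ j ∈ Finset.range (i+1), d (vf j) := by
    intro i hi
    simp only [hS]
    apply Finset.sum_image
    intro x hx y hy hxy
    rw [Finset.mem_coe, Finset.mem_range] at hx hy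
    exact hvf_inj (lt_of_lt_of_le hx hi) (lt_of_lt_of_le hy hi) hxy
  have hcompl : ∀ i, i < n → (S i)ᶜ = (Finset.Ico (i+1) n).image vf := by
    intro i hi
    ext v
    have hv : vf (e.symm v).val = v := by
      rw [hvf_lt (e.symm v).isLt, Fin.eta, Equiv.apply_symm_apply]
    simp only [Finset.mem_compl, hS, Finset.mem_image, Finset.mem_range, Finset.mem_Ico]
    constructor
    · intro hnot
      refine ⟨(e.symm v).val, ⟨?_, (e.symm v).isLt⟩, hv⟩
      by_contra hlt
      push_neg at hlt
      exact hnot ⟨(e.symm v).val, hlt, hv⟩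
    · rintro ⟨k, ⟨hk1, hk2⟩, rfl⟩ ⟨j, hj, hjk⟩
      have := hvf_inj (lt_of_lt_of_le hj hi) hk2 hjk
      omega
  have hcutS : ∀ i, i < n → (∑ u ∈ S i, ∑ v ∈ (S i)ᶜ, w u v)
      = ∑ j ∈ Finset.range (i+1), ∑ k ∈ Finset.Ico (i+1) n, w (vf j) (vf k) := by
    intro i hi
    rw [hcompl i hi]
    have houter : S i = (Finset.range (i+1)).image vf := by simp only [hS]
    rw [houter]
    rw [Finset.sum_image (fun x hx y hy hxy => hvf_inj
      (lt_of_lt_of_le (Finset.mem_range.mp hx) hi) (lt_of_lt_of_le (Finset.mem_range.mp hy) hi) hxy)]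
    refine Finset.sum_congr rfl fun j hj => ?_
    exact Finset.sum_image (fun x hx y hy hxy => hvf_inj
      (Finset.mem_Ico.mp hx).2 (Finset.mem_Ico.mp hy).2 hxy)
  -- per-index inequality
  have hmain_i : ∀ i ∈ Finset.range n,
      phi0 * ((∑ j ∈ Finset.range (i+1), d (vf j)) * D i)
        ≤ (∑ j ∈ Finset.range (i+1), ∑ k ∈ Finset.Ico (i+1) n, w (vf j) (vf k)) * D i := by
    intro i hi
    rw [Finset.mem_range] at hi
    rcases eq_or_lt_of_le (hD_nonneg i) with hDi | hDi
    · rw [← hDi]; simp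
    · have hbi : b (i+1) < b i := by
        have : D i = b i - b (i+1) := rfl
        linarith [hDi, this]
      have hbi_pos : 0 < b i := lt_of_le_of_lt (hb_nonneg (i+1)) hbi
      have hhvfi : 0 < h (vf i) := by
        by_contra hle
        push_neg at hle
        have h0 : h (vf i) = 0 := le_antisymm hle (hh _)
        rw [hb] at hbi_pos
        simp only [if_pos hi, h0] at hbi_pos
        norm_num at hbi_pos
      have hsub : S i ⊆ Finset.univ.filter (fun v => 0 < h v) := by
        intro v hv
        simp only [hS, Finset.mem_image, Finset.mem_range] at hv
        obtain ⟨j, hj, rfl⟩ := hv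
        simp only [Finset.mem_filter, Finset.mem_univ, true_and]
        exact lt_of_lt_of_le hhvfi (hvf_anti (Nat.lt_succ_iff.mp hj) hi)
      have hvol_le : (∑ v ∈ S i, d v) ≤ (∑ v, d v)/2 :=
        le_trans (Finset.sum_le_sum_of_subset_of_nonneg hsub
          (fun v _ _ => (hd_pos v).le)) hsupp
      have hne : (S i).Nonempty := by
        refine ⟨vf 0, ?_⟩
        simp only [hS, Finset.mem_image, Finset.mem_range]
        exact ⟨0, Nat.succ_pos i, rfl⟩
      have hk := hkey (S i) hne hvol_le
      rw [hvolS i hi, hcutS i hi] at hk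
      calc phi0 * ((∑ j ∈ Finset.range (i+1), d (vf j)) * D i)
          = (phi0 * (∑ j ∈ Finset.range (i+1), d (vf j))) * D i := by ring
        _ ≤ _ := mul_le_mul_of_nonneg_right hk (hD_nonneg i)
  -- identity I
  have hI : (∑ v, d v * h v ^ 2)
      = ∑ i ∈ Finset.range n, (∑ j ∈ Finset.range (i+1), d (vf j)) * D i := by
    rw [hreindex (fun v => d v * h v ^ 2)]
    have h1 : ∀ j ∈ Finset.range n, d (vf j) * h (vf j) ^ 2
        = ∑ i ∈ Finset.range n, (if j ≤ i then d (vf j) * D i else 0) := by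
      intro j hj
      rw [Finset.mem_range] at hj
      rw [← Finset.sum_filter, fil_ge n j, ← Finset.mul_sum]
      have : ∑ i ∈ Finset.Ico j n, D i = b j - b n := tele b j n hj.le
      rw [this, hbn, sub_zero, hb]
      simp only [if_pos hj]
    rw [Finset.sum_congr rfl h1, Finset.sum_comm]
    refine Finset.sum_congr rfl fun i hi => ?_
    rw [Finset.mem_range] at hi
    rw [← Finset.sum_filter, fil_le n i hi, Finset.sum_mul]
  -- identity II
  set W : ℕ → ℕ → ℝ := fun j k => w (vf j) (vf k) with hW
  have hII : (∑ u, ∑ v, w u v * |h u ^ 2 - h v ^ 2|)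
      = 2 * ∑ i ∈ Finset.range n,
          (∑ j ∈ Finset.range (i+1), ∑ k ∈ Finset.Ico (i+1) n, W j k) * D i := by
    have step1 : (∑ u, ∑ v, w u v * |h u ^ 2 - h v ^ 2|)
        = ∑ j ∈ Finset.range n, ∑ k ∈ Finset.range n, W j k * |b j - b k| := by
      rw [hreindex (fun u => ∑ v, w u v * |h u ^ 2 - h v ^ 2|)]
      refine Finset.sum_congr rfl fun j hj => ?_
      rw [Finset.mem_range] at hj
      rw [hreindex (fun v => w (vf j) v * |h (vf j) ^ 2 - h v ^ 2|)]
      refine Finset.sum_congr rfl fun k hk => ?_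
      rw [Finset.mem_range] at hk
      have hbj : b j = h (vf j) ^ 2 := by simp [hb, hj]
      have hbk : b k = h (vf k) ^ 2 := by simp [hb, hk]
      rw [hW, hbj, hbk]
    have hpair : ∀ j ∈ Finset.range n, ∀ k ∈ Finset.range n,
        W j k * |b j - b k|
          = (∑ i ∈ Finset.range n, if j ≤ i ∧ i < k then W j k * D i else 0)
          + (∑ i ∈ Finset.range n, if k ≤ i ∧ i < j then W j k * D i else 0) := by
      intro j hj k hk
      rw [Finset.mem_range] at hj hk
      rcases le_total j k with hjk | hjk
      · have h2 : (∑ i ∈ Finset.range n, if k ≤ i ∧ i < j then W j k * D i else 0) = 0 :=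
          Finset.sum_eq_zero fun i _ => if_neg (by omega)
        rw [h2, add_zero, ← Finset.sum_filter, fil_between n j k hk.le, ← Finset.mul_sum,
          tele b j k hjk, abs_of_nonneg (sub_nonneg.mpr (hb_anti hjk))]
      · have h2 : (∑ i ∈ Finset.range n, if j ≤ i ∧ i < k then W j k * D i else 0) = 0 :=
          Finset.sum_eq_zero fun i _ => if_neg (by omega)
        rw [h2, zero_add, ← Finset.sum_filter, fil_between n k j hj.le, ← Finset.mul_sum,
          tele b k j hjk, abs_of_nonpos (sub_nonpos.mpr (hb_anti hjk))]
        ring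
    rw [step1, Finset.sum_congr rfl (fun j hj => Finset.sum_congr rfl (hpair j hj))]
    have hFG : ∀ j k : ℕ,
        (∑ i ∈ Finset.range n, if k ≤ i ∧ i < j then W j k * D i else 0)
        = (∑ i ∈ Finset.range n, if k ≤ i ∧ i < j then W k j * D i else 0) := by
      intro j k
      refine Finset.sum_congr rfl fun i _ => ?_
      have : W j k = W k j := hw_symm _ _
      rw [this]
    have split : ∑ j ∈ Finset.range n, ∑ k ∈ Finset.range n,
          ((∑ i ∈ Finset.range n, if j ≤ i ∧ i < k then W j k * D i else 0)
          + (∑ i ∈ Finset.range n, if k ≤ i ∧ i < j then W j k * D i else 0))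
        = 2 * ∑ j ∈ Finset.range n, ∑ k ∈ Finset.range n,
            (∑ i ∈ Finset.range n, if j ≤ i ∧ i < k then W j k * D i else 0) := by
      rw [Finset.sum_congr rfl
        (fun j (_ : j ∈ Finset.range n) => Finset.sum_add_distrib),
        Finset.sum_add_distrib, two_mul]
      congr 1
      calc ∑ j ∈ Finset.range n, ∑ k ∈ Finset.range n,
            (∑ i ∈ Finset.range n, if k ≤ i ∧ i < j then W j k * D i else 0)
          = ∑ j ∈ Finset.range n, ∑ k ∈ Finset.range n,
            (∑ i ∈ Finset.range n, if k ≤ i ∧ i < j then W k j * D i else 0) :=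
            Finset.sum_congr rfl fun j _ => Finset.sum_congr rfl fun k _ => hFG j k
        _ = _ := Finset.sum_comm
    rw [split]
    congr 1
    calc ∑ j ∈ Finset.range n, ∑ k ∈ Finset.range n,
          (∑ i ∈ Finset.range n, if j ≤ i ∧ i < k then W j k * D i else 0)
        = ∑ j ∈ Finset.range n, ∑ i ∈ Finset.range n,
          (∑ k ∈ Finset.range n, if j ≤ i ∧ i < k then W j k * D i else 0) :=
          Finset.sum_congr rfl fun j _ => Finset.sum_comm
      _ = ∑ i ∈ Finset.range n, ∑ j ∈ Finset.range n,
          (∑ k ∈ Finset.range n, if j ≤ i ∧ i < k then W j k * D i else 0) :=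
          Finset.sum_comm
      _ = ∑ i ∈ Finset.range n,
          (∑ j ∈ Finset.range (i+1), ∑ k ∈ Finset.Ico (i+1) n, W j k) * D i := by
          refine Finset.sum_congr rfl fun i hi => ?_
          rw [Finset.mem_range] at hi
          have hj : ∀ j ∈ Finset.range n,
              (∑ k ∈ Finset.range n, if j ≤ i ∧ i < k then W j k * D i else 0)
              = if j ≤ i then ∑ k ∈ Finset.Ico (i+1) n, W j k * D i else 0 := by
            intro j _
            by_cases hji : j ≤ i
            · rw [if_pos hji]
              simp only [hji, true_and]
              rw [← Finset.sum_filter, fil_gt n i]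
            · rw [if_neg hji]
              exact Finset.sum_eq_zero fun k _ => if_neg (by tauto)
          rw [Finset.sum_congr rfl hj, ← Finset.sum_filter, fil_le n i hi, Finset.sum_mul]
          exact Finset.sum_congr rfl fun j _ => (Finset.sum_mul _ _ _).symm
  -- abbreviations
  have hA_nonneg : 0 ≤ ∑ v, d v * h v ^ 2 :=
    Finset.sum_nonneg fun v _ => mul_nonneg (hd_pos v).le (sq_nonneg _)
  set A := ∑ v, d v * h v ^ 2 with hA
  set T := ∑ u, ∑ v, w u v * |h u ^ 2 - h v ^ 2| with hT
  set L := ∑ u, ∑ v, w u v * (h u - h v) ^ 2 with hL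
  have hL_nonneg : 0 ≤ L := Finset.sum_nonneg fun u _ =>
    Finset.sum_nonneg fun v _ => mul_nonneg (hw_nonneg u v) (sq_nonneg _)
  have hT_nonneg : 0 ≤ T := Finset.sum_nonneg fun u _ =>
    Finset.sum_nonneg fun v _ => mul_nonneg (hw_nonneg u v) (abs_nonneg _)
  -- main sweep bound : 2 * phi0 * A ≤ T
  have hT1 : 2 * (phi0 * A) ≤ T := by
    rw [hI, hII, Finset.mul_sum]
    have h2 := Finset.sum_le_sum hmain_i
    linarith
  -- Cauchy-Schwarz
  have hCS0 := Finset.sum_mul_sq_le_sq_mul_sq (Finset.univ ×ˢ Finset.univ)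
    (fun p : V × V => Real.sqrt (w p.1 p.2) * |h p.1 - h p.2|)
    (fun p : V × V => Real.sqrt (w p.1 p.2) * (h p.1 + h p.2))
  have e1 : (∑ p ∈ Finset.univ ×ˢ Finset.univ,
      (Real.sqrt (w p.1 p.2) * |h p.1 - h p.2|) * (Real.sqrt (w p.1 p.2) * (h p.1 + h p.2))) = T := by
    rw [hT, ← Finset.sum_product']
    refine Finset.sum_congr rfl fun p _ => ?_
    have h1 : (Real.sqrt (w p.1 p.2) * |h p.1 - h p.2|) * (Real.sqrt (w p.1 p.2) * (h p.1 + h p.2))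
        = (Real.sqrt (w p.1 p.2) * Real.sqrt (w p.1 p.2)) * (|h p.1 - h p.2| * (h p.1 + h p.2)) := by
      ring
    rw [h1, Real.mul_self_sqrt (hw_nonneg _ _)]
    congr 1
    rw [← abs_of_nonneg (add_nonneg (hh p.1) (hh p.2)), ← abs_mul]
    congr 1
    ring
  have e2 : (∑ p ∈ Finset.univ ×ˢ Finset.univ,
      (Real.sqrt (w p.1 p.2) * |h p.1 - h p.2|) ^ 2) = L := by
    rw [hL, ← Finset.sum_product']
    refine Finset.sum_congr rfl fun p _ => ?_
    rw [mul_pow, Real.sq_sqrt (hw_nonneg _ _), sq_abs]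
  have e3 : (∑ p ∈ Finset.univ ×ˢ Finset.univ,
      (Real.sqrt (w p.1 p.2) * (h p.1 + h p.2)) ^ 2) ≤ 4 * A := by
    have step : (∑ p ∈ Finset.univ ×ˢ Finset.univ,
        (Real.sqrt (w p.1 p.2) * (h p.1 + h p.2)) ^ 2)
        = ∑ u, ∑ v, w u v * (h u + h v) ^ 2 := by
      rw [← Finset.sum_product']
      refine Finset.sum_congr rfl fun p _ => ?_
      rw [mul_pow, Real.sq_sqrt (hw_nonneg _ _)]
    rw [step]
    have step2 : (∑ u, ∑ v, w u v * (h u + h v) ^ 2)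
        ≤ ∑ u, ∑ v, (2 * (w u v * h u ^ 2) + 2 * (w u v * h v ^ 2)) := by
      refine Finset.sum_le_sum fun u _ => Finset.sum_le_sum fun v _ => ?_
      nlinarith [mul_nonneg (hw_nonneg u v) (sq_nonneg (h u - h v))]
    refine le_trans step2 (le_of_eq ?_)
    rw [Finset.sum_congr rfl (fun u (_ : u ∈ Finset.univ) => Finset.sum_add_distrib),
      Finset.sum_add_distrib]
    have hA1 : (∑ u, ∑ v, 2 * (w u v * h u ^ 2)) = 2 * ∑ u, d u * h u ^ 2 := by
      rw [Finset.mul_sum]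
      refine Finset.sum_congr rfl fun u _ => ?_
      rw [← Finset.mul_sum]
      congr 1
      rw [hd u]
      exact (Finset.sum_mul _ _ _).symm
    have hA2 : (∑ u, ∑ v, 2 * (w u v * h v ^ 2)) = 2 * ∑ v, d v * h v ^ 2 := by
      rw [Finset.sum_comm, Finset.mul_sum]
      refine Finset.sum_congr rfl fun v _ => ?_
      rw [← Finset.mul_sum]
      congr 1
      have h2 : (∑ u, w u v) = d v := by
        rw [hd v]
        exact Finset.sum_congr rfl fun u _ => hw_symm u v
      rw [← h2]
      exact (Finset.sum_mul _ _ _).symm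
    rw [hA1, hA2, hA]
    ring
  have hCS : T ^ 2 ≤ L * (4 * A) := by
    rw [← e1, ← e2]
    exact le_trans hCS0 (mul_le_mul_of_nonneg_left e3 (e2 ▸ hL_nonneg))
  -- conclude
  rcases eq_or_lt_of_le hA_nonneg with hA0 | hA0
  · rw [← hA0, mul_zero]
    exact hL_nonneg
  · have h4 : (2 * (phi0 * A)) ^ 2 ≤ T ^ 2 :=
      pow_le_pow_left₀ (mul_nonneg (by norm_num) (mul_nonneg hphi0_nonneg hA_nonneg)) hT1 2
    nlinarith [hCS, h4, hA0, hL_nonneg, mul_nonneg (sq_nonneg phi0) hA_nonneg]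

private lemma aux_sq_split (a : ℝ) : (max a 0)^2 + (max (-a) 0)^2 = a^2 := by
  rcases le_total a 0 with h | h
  · rw [max_eq_right h, max_eq_left (neg_nonneg.2 h)]; ring
  · rw [max_eq_left h, max_eq_right (neg_nonpos.2 h)]; ring

private lemma aux_pair (a b : ℝ) :
    (max a 0 - max b 0)^2 + (max (-a) 0 - max (-b) 0)^2 ≤ (a - b)^2 := by
  rcases le_total a 0 with ha | ha <;> rcases le_total b 0 with hb | hb
  · rw [max_eq_right ha, max_eq_right hb, max_eq_left (neg_nonneg.2 ha),
      max_eq_left (neg_nonneg.2 hb)]; nlinarith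
  · rw [max_eq_right ha, max_eq_left hb, max_eq_left (neg_nonneg.2 ha),
      max_eq_right (neg_nonpos.2 hb)]; nlinarith [mul_nonneg (neg_nonneg.2 ha) hb]
  · rw [max_eq_left ha, max_eq_right hb, max_eq_right (neg_nonpos.2 ha),
      max_eq_left (neg_nonneg.2 hb)]; nlinarith [mul_nonneg ha (neg_nonneg.2 hb)]
  · rw [max_eq_left ha, max_eq_left hb, max_eq_right (neg_nonpos.2 ha),
      max_eq_right (neg_nonpos.2 hb)]; nlinarith

theorem lambda_mu_ge_phi0_sq_half {V : Type*} [Fintype V] [DecidableEq V] [Nonempty V]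
    (w : V → V → ℝ)
    (hw_symm : ∀ u v, w u v = w v u)
    (hw_nonneg : ∀ u v, 0 ≤ w u v)
    (hw_loop : ∀ v, w v v = 0)
    (d : V → ℝ) (hd : ∀ v, d v = ∑ u, w v u)
    (hd_pos : ∀ v, 0 < d v)
    (vol : Finset V → ℝ) (hvol : ∀ S : Finset V, vol S = ∑ v ∈ S, d v)
    (cut : Finset V → ℝ) (hcut : ∀ S : Finset V, cut S = ∑ u ∈ S, ∑ v ∈ Sᶜ, w u v)
    (phi : Finset V → ℝ) (hphi : ∀ S : Finset V, phi S = cut S / min (vol S) (vol Sᶜ))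
    (QL QD : (V → ℝ) → ℝ)
    (hQL : ∀ x : V → ℝ, QL x = (1/2) * ∑ u, ∑ v, w u v * (x u - x v)^2)
    (hQD : ∀ x : V → ℝ, QD x = ∑ v, d v * x v ^ 2)
    (μ : ℝ) (hμ0 : 0 < μ) (hμhalf : μ ≤ 1/2)
    (phi0 : ℝ)
    (hphi0 : IsLeast {y : ℝ | ∃ S : Finset V, S.Nonempty ∧ S ≠ Finset.univ ∧ y = phi S} phi0)
    (hexists : ∃ S : Finset V,
        μ * vol Finset.univ ≤ vol S ∧ vol S ≤ (1 - μ) * vol Finset.univ)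
    (lam : ℝ)
    (hlam : IsGLB {y : ℝ | ∃ x : V → ℝ,
        (∑ v, d v * x v) = 0 ∧ QD x = 1 ∧
        (∀ v, Real.sqrt (μ / ((1 - μ) * vol Finset.univ)) ≤ |x v| ∧
              |x v| ≤ Real.sqrt ((1 - μ) / (μ * vol Finset.univ))) ∧ y = QL x} lam)
    :
    lam ≥ phi0^2 / 2 := by
  classical
  have hVol_pos : 0 < ∑ v, d v :=
    Finset.sum_pos (fun v _ => hd_pos v) Finset.univ_nonempty
  -- phi0 is nonnegative
  obtain ⟨⟨S₀, hS₀ne, hS₀univ, hS₀eq⟩, hphi0_lb⟩ := hphi0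
  have hvol_nonneg : ∀ S : Finset V, 0 ≤ vol S := fun S => by
    rw [hvol]; exact Finset.sum_nonneg fun v _ => (hd_pos v).le
  have hcut_nonneg : ∀ S : Finset V, 0 ≤ cut S := fun S => by
    rw [hcut]
    exact Finset.sum_nonneg fun u _ => Finset.sum_nonneg fun v _ => hw_nonneg u v
  have hphi0_nonneg : 0 ≤ phi0 := by
    rw [hS₀eq, hphi]
    exact div_nonneg (hcut_nonneg _) (le_min (hvol_nonneg _) (hvol_nonneg _))
  -- the key cut bound
  have hkey : ∀ S : Finset V, S.Nonempty → (∑ v ∈ S, d v) ≤ (∑ v, d v)/2 →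
      phi0 * (∑ v ∈ S, d v) ≤ ∑ u ∈ S, ∑ v ∈ Sᶜ, w u v := by
    intro S hne hle
    have hvolS_pos : 0 < vol S := by
      rw [hvol]; exact Finset.sum_pos (fun v _ => hd_pos v) hne
    have hSuniv : S ≠ Finset.univ := by
      intro hEq
      rw [hEq] at hle
      linarith
    have h1 : phi0 ≤ phi S := hphi0_lb ⟨S, hne, hSuniv, rfl⟩
    have hsplitv := Finset.sum_add_sum_compl S d
    have hcompl_vol : vol Sᶜ = (∑ v, d v) - vol S := by
      rw [hvol, hvol]; linarith
    have hminS : min (vol S) (vol Sᶜ) = vol S := by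
      apply min_eq_left
      rw [hcompl_vol, hvol]
      linarith
    have h2 : phi0 * vol S ≤ cut S := by
      have h3 := mul_le_mul_of_nonneg_right h1 hvolS_pos.le
      rw [hphi, hminS, div_mul_cancel₀ _ (ne_of_gt hvolS_pos)] at h3
      exact h3
    rw [hvol, hcut] at h2
    exact h2
  rw [ge_iff_le]
  apply hlam.2
  rintro y ⟨x, hx0, hxQD, -, rfl⟩
  rw [hQD] at hxQD
  rw [hQL]
  -- median
  obtain ⟨m, hm1, hm2⟩ : ∃ m : ℝ,
      (∑ v ∈ Finset.univ.filter (fun v => m < x v), d v) ≤ (∑ v, d v)/2 ∧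
      (∑ v ∈ Finset.univ.filter (fun v => x v < m), d v) ≤ (∑ v, d v)/2 := by
    set X := Finset.univ.image x with hX
    have hXne : X.Nonempty := Finset.Nonempty.image Finset.univ_nonempty x
    set C := X.filter
      (fun t => (∑ v, d v)/2 ≤ ∑ v ∈ Finset.univ.filter (fun v => x v ≤ t), d v) with hC
    have hCne : C.Nonempty := by
      refine ⟨X.max' hXne, Finset.mem_filter.mpr ⟨X.max'_mem hXne, ?_⟩⟩
      have hall : Finset.univ.filter (fun v => x v ≤ X.max' hXne) = Finset.univ :=
        Finset.filter_true_of_mem fun v _ =>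
          Finset.le_max' X _ (Finset.mem_image_of_mem x (Finset.mem_univ v))
      rw [hall]
      linarith
    set m := C.min' hCne with hm
    obtain ⟨hmX, hmhalf⟩ := Finset.mem_filter.mp (C.min'_mem hCne)
    refine ⟨m, ?_, ?_⟩
    · have hsplit := Finset.sum_filter_add_sum_filter_not Finset.univ (fun v => x v ≤ m) d
      have heq : Finset.univ.filter (fun v => ¬ x v ≤ m)
          = Finset.univ.filter (fun v => m < x v) := by
        apply Finset.filter_congr; intro v _; simp [not_le]
      rw [heq] at hsplit
      linarith
    · set S' := Finset.univ.filter (fun v => x v < m) with hS'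
      rcases S'.eq_empty_or_nonempty with hE | hne
      · rw [hE]
        simp only [Finset.sum_empty]
        linarith
      · have hne' : (S'.image x).Nonempty := hne.image x
        set t' := (S'.image x).max' hne' with ht'
        obtain ⟨v₀, hv₀S, hv₀⟩ := Finset.mem_image.mp ((S'.image x).max'_mem hne')
        have ht'm : t' < m := by
          rw [ht', ← hv₀]
          exact (Finset.mem_filter.mp hv₀S).2
        have ht'X : t' ∈ X := by
          rw [ht', ← hv₀]
          exact Finset.mem_image_of_mem x (Finset.mem_univ v₀)
        have hEq : Finset.univ.filter (fun v => x v ≤ t') = S' := by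
          ext v
          simp only [Finset.mem_filter, Finset.mem_univ, true_and, hS']
          constructor
          · intro hx
            exact lt_of_le_of_lt hx ht'm
          · intro hx
            exact Finset.le_max' _ _ (Finset.mem_image_of_mem x
              (Finset.mem_filter.mpr ⟨Finset.mem_univ v, hx⟩))
        have ht'C : t' ∉ C := fun hin =>
          absurd (Finset.min'_le C t' hin) (not_le.mpr ht'm)
        have hnot : ¬ ((∑ v, d v)/2 ≤ ∑ v ∈ Finset.univ.filter (fun v => x v ≤ t'), d v) := by
          intro hcon
          exact ht'C (Finset.mem_filter.mpr ⟨ht'X, hcon⟩)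
        rw [hEq] at hnot
        linarith [not_le.mp hnot]
  -- split into positive and negative part around the median
  set g : V → ℝ := fun v => x v - m with hg
  set gp : V → ℝ := fun v => max (g v) 0 with hgp
  set gm : V → ℝ := fun v => max (-(g v)) 0 with hgm
  have hsupp_p : Finset.univ.filter (fun v => 0 < gp v)
      = Finset.univ.filter (fun v => m < x v) := by
    apply Finset.filter_congr; intro v _
    simp only [hgp, hg, lt_max_iff, lt_irrefl, or_false, sub_pos]
  have hsupp_m : Finset.univ.filter (fun v => 0 < gm v)
      = Finset.univ.filter (fun v => x v < m) := by
    apply Finset.filter_congr; intro v _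
    simp only [hgm, hg, lt_max_iff, lt_irrefl, or_false, neg_sub, sub_pos]
  have sweep_p := sweep_s3 w hw_symm hw_nonneg d hd hd_pos phi0 hphi0_nonneg hkey gp
    (fun v => le_max_right _ _) (by rw [hsupp_p]; exact hm1)
  have sweep_m := sweep_s3 w hw_symm hw_nonneg d hd hd_pos phi0 hphi0_nonneg hkey gm
    (fun v => le_max_right _ _) (by rw [hsupp_m]; exact hm2)
  -- QD of g
  have hQDg : (∑ v, d v * g v ^ 2) = (∑ v, d v * gp v ^ 2) + (∑ v, d v * gm v ^ 2) := by
    rw [← Finset.sum_add_distrib]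
    refine Finset.sum_congr rfl fun v _ => ?_
    simp only [hgp, hgm]
    rw [← aux_sq_split (g v), mul_add]
  have hQDg_ge : (1:ℝ) ≤ ∑ v, d v * g v ^ 2 := by
    have hexp : ∀ v, d v * g v ^ 2
        = d v * x v ^ 2 - 2*m*(d v * x v) + m^2 * d v := by
      intro v; simp only [hg]; ring
    rw [Finset.sum_congr rfl fun v _ => hexp v]
    rw [Finset.sum_add_distrib, Finset.sum_sub_distrib, ← Finset.mul_sum, ← Finset.mul_sum]
    rw [hx0, hxQD]
    nlinarith [sq_nonneg m, hVol_pos]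
  -- QL split
  have hLsplit : (∑ u, ∑ v, w u v * (gp u - gp v)^2) + (∑ u, ∑ v, w u v * (gm u - gm v)^2)
      ≤ ∑ u, ∑ v, w u v * (x u - x v)^2 := by
    rw [← Finset.sum_add_distrib]
    refine Finset.sum_le_sum fun u _ => ?_
    rw [← Finset.sum_add_distrib]
    refine Finset.sum_le_sum fun v _ => ?_
    have hp := aux_pair (g u) (g v)
    have hxg : x u - x v = g u - g v := by simp only [hg]; ring
    rw [hxg]
    simp only [hgp, hgm]
    rw [← mul_add]
    exact mul_le_mul_of_nonneg_left hp (hw_nonneg u v)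
  -- combine
  have hchain : phi0^2 * 1 ≤ ∑ u, ∑ v, w u v * (x u - x v)^2 := by
    calc phi0^2 * 1 ≤ phi0^2 * (∑ v, d v * g v ^ 2) :=
          mul_le_mul_of_nonneg_left hQDg_ge (sq_nonneg phi0)
      _ = phi0^2 * (∑ v, d v * gp v ^ 2) + phi0^2 * (∑ v, d v * gm v ^ 2) := by
          rw [hQDg]; ring
      _ ≤ (∑ u, ∑ v, w u v * (gp u - gp v)^2) + (∑ u, ∑ v, w u v * (gm u - gm v)^2) :=
          add_le_add sweep_p sweep_m
      _ ≤ _ := hLsplit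
  linarith
end

section
/- Let 0 < μ ≤ 1/2 and let x : V → ℝ satisfy Σ_{v∈V} d(v)·x(v) = 0 and √(μ/((1−μ)·Vol(G))) ≤ |x(v)| ≤ √((1−μ)/(μ·Vol(G))) for every v ∈ V. Then the set P = {v ∈ V : x(v) > 0} satisfies μ·Vol(G) ≤ Vol(P) ≤ (1−μ)·Vol(G). -/
open Finset

theorem positive_part_volume_bounds {V : Type*} [Fintype V] [DecidableEq V] [Nonempty V]
    (w : V → V → ℝ)
    (hw_symm : ∀ u v, w u v = w v u)
    (hw_nonneg : ∀ u v, 0 ≤ w u v)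
    (hw_loop : ∀ v, w v v = 0)
    (d : V → ℝ) (hd : ∀ v, d v = ∑ u, w v u)
    (hd_pos : ∀ v, 0 < d v)
    (vol : Finset V → ℝ) (hvol : ∀ S : Finset V, vol S = ∑ v ∈ S, d v)
    (μ : ℝ) (hμ0 : 0 < μ) (hμhalf : μ ≤ 1/2)
    (x : V → ℝ)
    (hx_sum : (∑ v, d v * x v) = 0)
    (hx_bounds : ∀ v, Real.sqrt (μ / ((1 - μ) * vol Finset.univ)) ≤ |x v| ∧
        |x v| ≤ Real.sqrt ((1 - μ) / (μ * vol Finset.univ))) :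
    μ * vol Finset.univ ≤ vol (Finset.univ.filter fun v => 0 < x v) ∧
    vol (Finset.univ.filter fun v => 0 < x v) ≤ (1 - μ) * vol Finset.univ := by
  have hμ1 : μ < 1 := by linarith
  have h1μ : 0 < 1 - μ := by linarith
  have hVG : 0 < vol Finset.univ := by
    rw [hvol]
    exact Finset.sum_pos (fun v _ => hd_pos v) Finset.univ_nonempty
  set VG := vol Finset.univ with hVGdef
  set b := Real.sqrt (μ / ((1 - μ) * VG)) with hbdef
  set a := Real.sqrt ((1 - μ) / (μ * VG)) with hadef
  have hb : 0 < b := Real.sqrt_pos.mpr (by positivity)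
  have ha : 0 ≤ a := Real.sqrt_nonneg _
  have key : μ * a = (1 - μ) * b := by
    have h1 : μ * a = Real.sqrt (μ ^ 2 * ((1 - μ) / (μ * VG))) := by
      rw [Real.sqrt_mul (sq_nonneg μ), Real.sqrt_sq hμ0.le]
    have h2 : (1 - μ) * b = Real.sqrt ((1 - μ) ^ 2 * (μ / ((1 - μ) * VG))) := by
      rw [Real.sqrt_mul (sq_nonneg _), Real.sqrt_sq h1μ.le]
    rw [h1, h2]
    congr 1
    field_simp
  set P := Finset.univ.filter fun v => 0 < x v with hPdef
  set N := Finset.univ.filter fun v => ¬ 0 < x v with hNdef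
  have hxN : ∀ v ∈ N, x v < 0 := by
    intro v hv
    have hvle : ¬ 0 < x v := (Finset.mem_filter.mp hv).2
    rcases lt_or_eq_of_le (not_lt.mp hvle) with h | h
    · exact h
    · exfalso
      have := (hx_bounds v).1
      rw [h, abs_zero] at this
      linarith
  -- volume partition
  have hvolPN : vol P + vol N = VG := by
    rw [hvol, hvol, hVGdef, hvol]
    exact Finset.sum_filter_add_sum_filter_not Finset.univ _ _
  -- sum partition
  have hsumPN : (∑ v ∈ P, d v * x v) + (∑ v ∈ N, d v * x v) = 0 := by
    rw [← hx_sum]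
    exact Finset.sum_filter_add_sum_filter_not Finset.univ _ _
  -- bounds on P-sum
  have hSP_lb : vol P * b ≤ ∑ v ∈ P, d v * x v := by
    rw [hvol, Finset.sum_mul]
    apply Finset.sum_le_sum
    intro v hv
    have hxv : 0 < x v := (Finset.mem_filter.mp hv).2
    have := (hx_bounds v).1
    rw [abs_of_pos hxv] at this
    exact mul_le_mul_of_nonneg_left this (hd_pos v).le
  have hSP_ub : (∑ v ∈ P, d v * x v) ≤ vol P * a := by
    rw [hvol, Finset.sum_mul]
    apply Finset.sum_le_sum
    intro v hv
    have hxv : 0 < x v := (Finset.mem_filter.mp hv).2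
    have := (hx_bounds v).2
    rw [abs_of_pos hxv] at this
    exact mul_le_mul_of_nonneg_left this (hd_pos v).le
  -- bounds on N-sum
  have hSN_lb : vol N * (-a) ≤ ∑ v ∈ N, d v * x v := by
    rw [hvol, Finset.sum_mul]
    apply Finset.sum_le_sum
    intro v hv
    have hxv : x v < 0 := hxN v hv
    have := (hx_bounds v).2
    rw [abs_of_neg hxv] at this
    have : -a ≤ x v := by linarith
    exact mul_le_mul_of_nonneg_left this (hd_pos v).le
  have hSN_ub : (∑ v ∈ N, d v * x v) ≤ vol N * (-b) := by
    rw [hvol, Finset.sum_mul]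
    apply Finset.sum_le_sum
    intro v hv
    have hxv : x v < 0 := hxN v hv
    have := (hx_bounds v).1
    rw [abs_of_neg hxv] at this
    have : x v ≤ -b := by linarith
    exact mul_le_mul_of_nonneg_left this (hd_pos v).le
  -- combine
  have h1 : vol P * b ≤ vol N * a := by nlinarith
  have h2 : vol N * b ≤ vol P * a := by nlinarith
  constructor
  · nlinarith [mul_le_mul_of_nonneg_left h2 hμ0.le]
  · nlinarith [mul_le_mul_of_nonneg_left h1 h1μ.le]
end

section
/- Let g : V → ℝ and define g_+(v) = max(g(v), 0) and g_−(v) = max(−g(v), 0). If g_+ and g_− are both not identically zero, then Q_L(g)/Q_D(g) ≥ min{ Q_L(g_+)/Q_D(g_+), Q_L(g_−)/Q_D(g_−) }. -/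
open Finset

theorem rayleigh_min_pos_neg_parts {V : Type*} [Fintype V] [DecidableEq V] [Nonempty V]
    (w : V → V → ℝ)
    (hw_symm : ∀ u v, w u v = w v u)
    (hw_nonneg : ∀ u v, 0 ≤ w u v)
    (hw_loop : ∀ v, w v v = 0)
    (d : V → ℝ) (hd : ∀ v, d v = ∑ u, w v u)
    (hd_pos : ∀ v, 0 < d v)
    (vol : Finset V → ℝ) (hvol : ∀ S : Finset V, vol S = ∑ v ∈ S, d v)
    (QL QD : (V → ℝ) → ℝ)
    (hQL : ∀ x : V → ℝ, QL x = (1/2) * ∑ u, ∑ v, w u v * (x u - x v)^2)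
    (hQD : ∀ x : V → ℝ, QD x = ∑ v, d v * x v ^ 2)
    (g : V → ℝ)
    (hgp : (fun v => max (g v) 0) ≠ (fun _ => (0:ℝ)))
    (hgm : (fun v => max (-g v) 0) ≠ (fun _ => (0:ℝ))) :
    QL g / QD g ≥
      min (QL (fun v => max (g v) 0) / QD (fun v => max (g v) 0))
          (QL (fun v => max (-g v) 0) / QD (fun v => max (-g v) 0)) := by
  set P : V → ℝ := fun v => max (g v) 0 with hP
  set N : V → ℝ := fun v => max (-g v) 0 with hN
  have hPnn : ∀ v, 0 ≤ P v := fun v => le_max_right _ _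
  have hNnn : ∀ v, 0 ≤ N v := fun v => le_max_right _ _
  have hPN0 : ∀ v, P v * N v = 0 := by
    intro v
    rcases le_total (g v) 0 with h | h
    · simp [hP, max_eq_right h]
    · simp [hN, max_eq_right (neg_nonpos_of_nonneg h)]
  have hdiff : ∀ v, P v - N v = g v := by
    intro v
    rcases le_total (g v) 0 with h | h
    · simp [hP, hN, max_eq_right h, max_eq_left (neg_nonneg.2 h)]
    · simp [hP, hN, max_eq_left h, max_eq_right (neg_nonpos_of_nonneg h)]
  -- QD g = QD P + QD N
  have hQDsplit : QD g = QD P + QD N := by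
    rw [hQD, hQD, hQD, ← Finset.sum_add_distrib]
    apply Finset.sum_congr rfl
    intro v _
    have h3 : g v ^ 2 = P v ^ 2 + N v ^ 2 := by
      have h1 := hPN0 v
      have h2 := hdiff v
      linear_combination (-(g v + P v - N v)) * h2 - 2 * h1
    rw [h3]; ring
  -- QL P + QL N ≤ QL g
  have hQLsplit : QL P + QL N ≤ QL g := by
    rw [hQL, hQL, hQL, ← mul_add, ← Finset.sum_add_distrib]
    apply mul_le_mul_of_nonneg_left _ (by norm_num)
    apply Finset.sum_le_sum
    intro u _
    rw [← Finset.sum_add_distrib]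
    apply Finset.sum_le_sum
    intro v _
    rw [← mul_add]
    apply mul_le_mul_of_nonneg_left _ (hw_nonneg u v)
    nlinarith [hPN0 u, hPN0 v, hdiff u, hdiff v, hPnn u, hPnn v, hNnn u, hNnn v,
      mul_nonneg (hPnn u) (hNnn v), mul_nonneg (hPnn v) (hNnn u)]
  -- positivity of QD P and QD N
  have hQDpos : ∀ (x : V → ℝ), x ≠ (fun _ => (0:ℝ)) → 0 < QD x := by
    intro x hx
    rw [hQD]
    obtain ⟨v, hv⟩ : ∃ v, x v ≠ 0 := by
      by_contra h
      push_neg at h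
      exact hx (funext h)
    apply Finset.sum_pos' (fun i _ => mul_nonneg (hd_pos i).le (sq_nonneg _))
    exact ⟨v, Finset.mem_univ v, mul_pos (hd_pos v) (by positivity)⟩
  have hQDP : 0 < QD P := hQDpos P hgp
  have hQDN : 0 < QD N := hQDpos N hgm
  have hQDg : 0 < QD g := by rw [hQDsplit]; linarith
  set m := min (QL P / QD P) (QL N / QD N) with hm
  have h1 : m * QD P ≤ QL P := by
    have := min_le_left (QL P / QD P) (QL N / QD N)
    rw [← hm] at this
    calc m * QD P ≤ (QL P / QD P) * QD P := by
          exact mul_le_mul_of_nonneg_right this hQDP.le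
      _ = QL P := by field_simp
  have h2 : m * QD N ≤ QL N := by
    have := min_le_right (QL P / QD P) (QL N / QD N)
    rw [← hm] at this
    calc m * QD N ≤ (QL N / QD N) * QD N := by
          exact mul_le_mul_of_nonneg_right this hQDN.le
      _ = QL N := by field_simp
  rw [ge_iff_le, le_div_iff₀ hQDg, hQDsplit]
  nlinarith [h1, h2]
end

section
/- Let f : V → ℝ be nonnegative and not identically zero. Then Q_L(f)/Q_D(f) ≥ ( (1/2)·Σ_{u,v∈V} w(u,v)·|f(u)² − f(v)²| )² / ( 2·Q_D(f)² ). -/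
open Finset

theorem rayleigh_cauchy_schwarz_lower {V : Type*} [Fintype V] [DecidableEq V] [Nonempty V]
    (w : V → V → ℝ)
    (hw_symm : ∀ u v, w u v = w v u)
    (hw_nonneg : ∀ u v, 0 ≤ w u v)
    (hw_loop : ∀ v, w v v = 0)
    (d : V → ℝ) (hd : ∀ v, d v = ∑ u, w v u)
    (hd_pos : ∀ v, 0 < d v)
    (vol : Finset V → ℝ) (hvol : ∀ S : Finset V, vol S = ∑ v ∈ S, d v)
    (QL QD : (V → ℝ) → ℝ)
    (hQL : ∀ x : V → ℝ, QL x = (1/2) * ∑ u, ∑ v, w u v * (x u - x v)^2)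
    (hQD : ∀ x : V → ℝ, QD x = ∑ v, d v * x v ^ 2)
    (f : V → ℝ) (hf_nonneg : ∀ v, 0 ≤ f v) (hf_ne : f ≠ (fun _ => (0:ℝ))) :
    QL f / QD f ≥
      ((1/2) * ∑ u, ∑ v, w u v * |f u ^ 2 - f v ^ 2|)^2 / (2 * (QD f)^2) := by
  set S : ℝ := ∑ u, ∑ v, w u v * |f u ^ 2 - f v ^ 2| with hS
  -- QD f > 0
  have hQDpos : 0 < QD f := by
    obtain ⟨v0, hv0⟩ : ∃ v, f v ≠ 0 := by
      by_contra h
      push_neg at h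
      exact hf_ne (funext h)
    rw [hQD]
    have : 0 < d v0 * f v0 ^ 2 :=
      mul_pos (hd_pos v0) (pow_pos (lt_of_le_of_ne (hf_nonneg v0) (Ne.symm hv0)) 2)
    exact Finset.sum_pos' (fun v _ => mul_nonneg (hd_pos v).le (sq_nonneg _)) ⟨v0, mem_univ v0, this⟩
  -- Cauchy-Schwarz on pairs
  have key : S ^ 2 ≤ (∑ p : V × V, w p.1 p.2 * (f p.1 - f p.2) ^ 2) *
      (∑ p : V × V, w p.1 p.2 * (f p.1 + f p.2) ^ 2) := by
    have hS' : S = ∑ p : V × V,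
        (Real.sqrt (w p.1 p.2) * |f p.1 - f p.2|) * (Real.sqrt (w p.1 p.2) * (f p.1 + f p.2)) := by
      rw [hS, Fintype.sum_prod_type]
      apply Finset.sum_congr rfl
      intro u _
      apply Finset.sum_congr rfl
      intro v _
      have hfu := hf_nonneg u
      have hfv := hf_nonneg v
      have h1 : Real.sqrt (w u v) * Real.sqrt (w u v) = w u v :=
        Real.mul_self_sqrt (hw_nonneg u v)
      have h2 : |f u ^ 2 - f v ^ 2| = |f u - f v| * (f u + f v) := by
        have h3 : f u ^ 2 - f v ^ 2 = (f u - f v) * (f u + f v) := by ring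
        rw [h3, abs_mul, abs_of_nonneg (by positivity : (0:ℝ) ≤ f u + f v)]
      rw [h2, show (Real.sqrt (w u v) * |f u - f v|) * (Real.sqrt (w u v) * (f u + f v)) =
        (Real.sqrt (w u v) * Real.sqrt (w u v)) * (|f u - f v| * (f u + f v)) from by ring, h1]
    rw [hS']
    calc (∑ p : V × V,
        (Real.sqrt (w p.1 p.2) * |f p.1 - f p.2|) * (Real.sqrt (w p.1 p.2) * (f p.1 + f p.2))) ^ 2
        ≤ (∑ p : V × V, (Real.sqrt (w p.1 p.2) * |f p.1 - f p.2|) ^ 2) *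
          (∑ p : V × V, (Real.sqrt (w p.1 p.2) * (f p.1 + f p.2)) ^ 2) :=
        Finset.sum_mul_sq_le_sq_mul_sq _ _ _
      _ = (∑ p : V × V, w p.1 p.2 * (f p.1 - f p.2) ^ 2) *
          (∑ p : V × V, w p.1 p.2 * (f p.1 + f p.2) ^ 2) := by
        congr 1
        · exact Finset.sum_congr rfl fun p _ => by
            rw [mul_pow, Real.sq_sqrt (hw_nonneg p.1 p.2), sq_abs]
        · exact Finset.sum_congr rfl fun p _ => by
            rw [mul_pow, Real.sq_sqrt (hw_nonneg p.1 p.2)]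
  -- Identify the first factor with 2 * QL f
  have hA : (∑ p : V × V, w p.1 p.2 * (f p.1 - f p.2) ^ 2) = 2 * QL f := by
    rw [hQL, Fintype.sum_prod_type]
    ring
  -- Bound second factor by 4 * QD f
  have hB : (∑ p : V × V, w p.1 p.2 * (f p.1 + f p.2) ^ 2) ≤ 4 * QD f := by
    have step1 : (∑ p : V × V, w p.1 p.2 * (f p.1 + f p.2) ^ 2) ≤
        ∑ p : V × V, w p.1 p.2 * (2 * (f p.1 ^ 2 + f p.2 ^ 2)) := by
      apply Finset.sum_le_sum
      intro p _
      apply mul_le_mul_of_nonneg_left _ (hw_nonneg p.1 p.2)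
      nlinarith [sq_nonneg (f p.1 - f p.2)]
    have step2 : (∑ p : V × V, w p.1 p.2 * (2 * (f p.1 ^ 2 + f p.2 ^ 2))) = 4 * QD f := by
      have e1 : (∑ p : V × V, w p.1 p.2 * (2 * (f p.1 ^ 2 + f p.2 ^ 2))) =
          2 * ((∑ u, ∑ v, w u v * f u ^ 2) + (∑ u, ∑ v, w u v * f v ^ 2)) := by
        rw [Fintype.sum_prod_type, mul_add, Finset.mul_sum, Finset.mul_sum,
          ← Finset.sum_add_distrib]
        apply Finset.sum_congr rfl
        intro u _
        rw [Finset.mul_sum, Finset.mul_sum, ← Finset.sum_add_distrib]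
        apply Finset.sum_congr rfl
        intro v _; ring
      have e2 : (∑ u, ∑ v, w u v * f u ^ 2) = QD f := by
        rw [hQD]
        apply Finset.sum_congr rfl
        intro u _
        rw [← Finset.sum_mul, ← hd u, mul_comm]
      have e3 : (∑ u, ∑ v, w u v * f v ^ 2) = QD f := by
        rw [Finset.sum_comm, hQD]
        apply Finset.sum_congr rfl
        intro v _
        have : ∑ u, w u v * f v ^ 2 = (∑ u, w v u) * f v ^ 2 := by
          rw [Finset.sum_mul]
          exact Finset.sum_congr rfl (fun u _ => by rw [hw_symm u v])
        rw [this, ← hd v]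
      rw [e1, e2, e3]; ring
    linarith
  have hQLnonneg : 0 ≤ QL f := by
    rw [hQL]
    apply mul_nonneg (by norm_num)
    apply Finset.sum_nonneg; intro u _
    apply Finset.sum_nonneg; intro v _
    exact mul_nonneg (hw_nonneg u v) (sq_nonneg _)
  have hS2 : S ^ 2 ≤ 8 * QL f * QD f := by
    calc S ^ 2 ≤ (∑ p : V × V, w p.1 p.2 * (f p.1 - f p.2) ^ 2) *
        (∑ p : V × V, w p.1 p.2 * (f p.1 + f p.2) ^ 2) := key
      _ ≤ (2 * QL f) * (4 * QD f) := by
          rw [hA]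
          apply mul_le_mul_of_nonneg_left hB
          linarith
      _ = 8 * QL f * QD f := by ring
  rw [ge_iff_le, div_le_div_iff₀ (by positivity) hQDpos]
  nlinarith [hQDpos, hS2, sq_nonneg S]
end

section
/- Let v_1,…,v_n be an enumeration of V and let f : V → ℝ be nonnegative with f(v_1) ≥ f(v_2) ≥ … ≥ f(v_n). With S_j = {v_1,…,v_j}, one has (1/2)·Σ_{u,v∈V} w(u,v)·|f(u)² − f(v)²| = Σ_{i=1}^{n−1} (f(v_i)² − f(v_{i+1})²)·|∂S_i|. -/
open Finset

theorem sweep_cut_identity {V : Type*} [Fintype V] [DecidableEq V] [Nonempty V]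
    (w : V → V → ℝ)
    (hw_symm : ∀ u v, w u v = w v u)
    (hw_nonneg : ∀ u v, 0 ≤ w u v)
    (hw_loop : ∀ v, w v v = 0)
    (cut : Finset V → ℝ) (hcut : ∀ S : Finset V, cut S = ∑ u ∈ S, ∑ v ∈ Sᶜ, w u v)
    (n : ℕ) (hn : n = Fintype.card V) (e : Fin n ≃ V)
    (f : V → ℝ) (hf_nonneg : ∀ v, 0 ≤ f v)
    (hf_sorted : ∀ i j : Fin n, i ≤ j → f (e j) ≤ f (e i))
    (S : ℕ → Finset V)
    (hS : ∀ j : ℕ, S j = (Finset.univ.filter fun i : Fin n => (i : ℕ) < j).image e)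
    (fseq : ℕ → ℝ) (hfseq : ∀ i : Fin n, fseq (i : ℕ) = f (e i)) :
    (1/2) * ∑ u, ∑ v, w u v * |f u ^ 2 - f v ^ 2|
      = ∑ i ∈ Finset.range (n - 1), (fseq i ^ 2 - fseq (i + 1) ^ 2) * cut (S (i + 1)) := by
  classical
  have hg_mono : ∀ i j : Fin n, i ≤ j → f (e j) ^ 2 ≤ f (e i) ^ 2 := fun i j h =>
    pow_le_pow_left₀ (hf_nonneg _) (hf_sorted i j h) 2
  -- telescoping
  have htel : ∀ a b : ℕ, a ≤ b →
      ∑ k ∈ Finset.Ico a b, (fseq k ^ 2 - fseq (k + 1) ^ 2) = fseq a ^ 2 - fseq b ^ 2 := by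
    intro a b hab
    rw [Finset.sum_Ico_eq_sub _ hab, Finset.sum_range_sub' (fun k => fseq k ^ 2),
        Finset.sum_range_sub' (fun k => fseq k ^ 2)]
    ring
  -- reindex the big sum via e
  have hA : ∑ u, ∑ v, w u v * |f u ^ 2 - f v ^ 2|
      = ∑ i : Fin n, ∑ j : Fin n, w (e i) (e j) * |f (e i) ^ 2 - f (e j) ^ 2| := by
    rw [← Equiv.sum_comp e (fun u => ∑ v, w u v * |f u ^ 2 - f v ^ 2|)]
    exact Finset.sum_congr rfl fun i _ => (Equiv.sum_comp e _).symm
  -- split into ordered pairs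
  have hsplit : ∀ i j : Fin n, w (e i) (e j) * |f (e i) ^ 2 - f (e j) ^ 2|
      = (if i < j then w (e i) (e j) * (f (e i) ^ 2 - f (e j) ^ 2) else 0)
      + (if j < i then w (e i) (e j) * (f (e j) ^ 2 - f (e i) ^ 2) else 0) := by
    intro i j
    rcases lt_trichotomy i j with h | h | h
    · rw [if_pos h, if_neg (asymm h), abs_of_nonneg (sub_nonneg.mpr (hg_mono i j h.le))]
      ring
    · subst h; simp
    · rw [if_neg (asymm h), if_pos h, abs_of_nonpos (sub_nonpos.mpr (hg_mono j i h.le))]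
      ring
  have hswap : ∑ i : Fin n, ∑ j : Fin n,
        (if j < i then w (e i) (e j) * (f (e j) ^ 2 - f (e i) ^ 2) else 0)
      = ∑ i : Fin n, ∑ j : Fin n,
        (if i < j then w (e i) (e j) * (f (e i) ^ 2 - f (e j) ^ 2) else 0) := by
    rw [Finset.sum_comm]
    refine Finset.sum_congr rfl fun i _ => Finset.sum_congr rfl fun j _ => ?_
    rw [hw_symm]
  have hB : ∑ i : Fin n, ∑ j : Fin n, w (e i) (e j) * |f (e i) ^ 2 - f (e j) ^ 2|
      = 2 * ∑ i : Fin n, ∑ j : Fin n,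
          (if i < j then w (e i) (e j) * (f (e i) ^ 2 - f (e j) ^ 2) else 0) := by
    have : ∑ i : Fin n, ∑ j : Fin n, w (e i) (e j) * |f (e i) ^ 2 - f (e j) ^ 2|
        = (∑ i : Fin n, ∑ j : Fin n,
            (if i < j then w (e i) (e j) * (f (e i) ^ 2 - f (e j) ^ 2) else 0))
        + ∑ i : Fin n, ∑ j : Fin n,
            (if j < i then w (e i) (e j) * (f (e j) ^ 2 - f (e i) ^ 2) else 0) := by
      rw [← Finset.sum_add_distrib]
      refine Finset.sum_congr rfl fun i _ => ?_
      rw [← Finset.sum_add_distrib]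
      exact Finset.sum_congr rfl fun j _ => hsplit i j
    rw [this, hswap]; ring
  -- each ordered term as a telescoping sum over k
  have hC : ∀ i j : Fin n,
      (if i < j then w (e i) (e j) * (f (e i) ^ 2 - f (e j) ^ 2) else 0)
      = ∑ k ∈ Finset.range (n - 1),
          (if (i : ℕ) ≤ k ∧ k < (j : ℕ) then
            w (e i) (e j) * (fseq k ^ 2 - fseq (k + 1) ^ 2) else 0) := by
    intro i j
    by_cases h : i < j
    · rw [if_pos h]
      have hsub : Finset.Ico (i : ℕ) (j : ℕ) ⊆ Finset.range (n - 1) := by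
        intro k hk
        simp only [Finset.mem_Ico] at hk
        simp only [Finset.mem_range]
        have := j.isLt
        omega
      have hs : ∑ k ∈ Finset.range (n - 1),
          (if (i : ℕ) ≤ k ∧ k < (j : ℕ) then (fseq k ^ 2 - fseq (k + 1) ^ 2) else 0)
          = f (e i) ^ 2 - f (e j) ^ 2 := by
        have : ∀ k : ℕ, ((i : ℕ) ≤ k ∧ k < (j : ℕ)) ↔ k ∈ Finset.Ico (i : ℕ) (j : ℕ) := by
          intro k; simp [Finset.mem_Ico]
        simp only [this]
        rw [Finset.sum_ite_mem, Finset.inter_eq_right.mpr hsub,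
            htel _ _ (le_of_lt (Fin.lt_def.mp h)), hfseq i, hfseq j]
      rw [← hs, Finset.mul_sum]
      exact Finset.sum_congr rfl fun k _ => by rw [mul_ite, mul_zero]
    · rw [if_neg h]
      symm
      apply Finset.sum_eq_zero
      intro k _
      rw [if_neg]
      rintro ⟨h1, h2⟩
      exact h (Fin.lt_def.mpr (lt_of_le_of_lt h1 h2))
  -- cut in terms of indices
  have hkey : ∀ k : ℕ, cut (S (k + 1))
      = ∑ i : Fin n, ∑ j : Fin n,
          (if (i : ℕ) ≤ k ∧ k < (j : ℕ) then w (e i) (e j) else 0) := by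
    intro k
    have hsubsum : ∀ (T : Finset V) (F : V → ℝ),
        ∑ u ∈ T, F u = ∑ u : V, if u ∈ T then F u else 0 := by
      intro T F
      rw [Finset.sum_ite_mem, Finset.univ_inter]
    have hmem : ∀ i : Fin n, e i ∈ S (k + 1) ↔ (i : ℕ) ≤ k := by
      intro i
      rw [hS]
      simp [Finset.mem_image, e.injective.eq_iff, Nat.lt_succ_iff]
    rw [hcut, hsubsum]
    rw [← Equiv.sum_comp e (fun u => if u ∈ S (k+1) then ∑ v ∈ (S (k+1))ᶜ, w u v else 0)]
    refine Finset.sum_congr rfl fun i _ => ?_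
    rw [hsubsum ((S (k+1))ᶜ) (fun v => w (e i) v),
        ← Equiv.sum_comp e (fun v => if v ∈ (S (k+1))ᶜ then w (e i) v else 0)]
    by_cases hi : (i : ℕ) ≤ k
    · rw [if_pos ((hmem i).mpr hi)]
      refine Finset.sum_congr rfl fun j _ => ?_
      by_cases hj : k < (j : ℕ)
      · have hjc : e j ∈ (S (k + 1))ᶜ := by
          simp only [Finset.mem_compl, hmem j]; omega
        rw [if_pos hjc, if_pos (⟨hi, hj⟩ : (i : ℕ) ≤ k ∧ k < (j : ℕ))]
      · have hjc : e j ∉ (S (k + 1))ᶜ := by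
          simp only [Finset.mem_compl, hmem j, not_not]; omega
        rw [if_neg hjc, if_neg (fun hc : (i : ℕ) ≤ k ∧ k < (j : ℕ) => hj hc.2)]
    · rw [if_neg (fun hc => hi ((hmem i).mp hc))]
      symm
      apply Finset.sum_eq_zero
      intro j _
      exact if_neg (fun hc => hi hc.1)
  -- put it all together
  rw [hA, hB]
  have hfinal : ∑ i : Fin n, ∑ j : Fin n,
        (if i < j then w (e i) (e j) * (f (e i) ^ 2 - f (e j) ^ 2) else 0)
      = ∑ k ∈ Finset.range (n - 1),
          (fseq k ^ 2 - fseq (k + 1) ^ 2) * cut (S (k + 1)) := by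
    simp only [hC]
    rw [show (∑ i : Fin n, ∑ j : Fin n, ∑ k ∈ Finset.range (n - 1),
          (if (i : ℕ) ≤ k ∧ k < (j : ℕ) then
            w (e i) (e j) * (fseq k ^ 2 - fseq (k + 1) ^ 2) else 0))
        = ∑ i : Fin n, ∑ k ∈ Finset.range (n - 1), ∑ j : Fin n,
          (if (i : ℕ) ≤ k ∧ k < (j : ℕ) then
            w (e i) (e j) * (fseq k ^ 2 - fseq (k + 1) ^ 2) else 0)
      from Finset.sum_congr rfl fun i _ => Finset.sum_comm, Finset.sum_comm]
    refine Finset.sum_congr rfl fun k _ => ?_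
    rw [hkey k, Finset.mul_sum]
    refine Finset.sum_congr rfl fun i _ => ?_
    rw [Finset.mul_sum]
    refine Finset.sum_congr rfl fun j _ => ?_
    split_ifs <;> ring
  rw [hfinal]
  ring
end

section
/- Let 0 < μ ≤ 1/2, let g : V → ℝ be feasible for the spectral program for μ, and fix an enumeration v_1,…,v_n of V with g(v_1) ≥ … ≥ g(v_n). Let S_j = {v_1,…,v_j}, let h be the largest index with Vol(S_h) ≤ Vol(G)/2, let z be the largest index with g(v_z) > 0, and let g_+(v) = max(g(v),0). If h ≥ z, then Q_L(g_+)/Q_D(g_+) ≥ (1/2)·( (μ²/(1−μ)²)·φ_μ(G) + ((1−2μ)/(1−μ)²)·φ_0(G) )². -/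
open Finset

private lemma telescope_Ico (f : ℕ → ℝ) {a b : ℕ} (hab : a ≤ b) :
    ∑ k ∈ Finset.Ico a b, (f k - f (k + 1)) = f a - f b := by
  rw [Finset.sum_Ico_eq_sub _ hab, Finset.sum_range_sub' f, Finset.sum_range_sub' f]
  ring

set_option maxHeartbeats 1600000 in
theorem sweep_case_h_ge_z {V : Type*} [Fintype V] [DecidableEq V] [Nonempty V]
    (w : V → V → ℝ)
    (hw_symm : ∀ u v, w u v = w v u)
    (hw_nonneg : ∀ u v, 0 ≤ w u v)
    (hw_loop : ∀ v, w v v = 0)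
    (d : V → ℝ) (hd : ∀ v, d v = ∑ u, w v u)
    (hd_pos : ∀ v, 0 < d v)
    (vol : Finset V → ℝ) (hvol : ∀ S : Finset V, vol S = ∑ v ∈ S, d v)
    (cut : Finset V → ℝ) (hcut : ∀ S : Finset V, cut S = ∑ u ∈ S, ∑ v ∈ Sᶜ, w u v)
    (phi : Finset V → ℝ) (hphi : ∀ S : Finset V, phi S = cut S / min (vol S) (vol Sᶜ))
    (QL QD : (V → ℝ) → ℝ)
    (hQL : ∀ x : V → ℝ, QL x = (1/2) * ∑ u, ∑ v, w u v * (x u - x v)^2)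
    (hQD : ∀ x : V → ℝ, QD x = ∑ v, d v * x v ^ 2)
    (μ : ℝ) (hμ0 : 0 < μ) (hμhalf : μ ≤ 1/2)
    (phi0 : ℝ)
    (hphi0 : IsLeast {y : ℝ | ∃ S : Finset V, S.Nonempty ∧ S ≠ Finset.univ ∧ y = phi S} phi0)
    (phimu : ℝ)
    (hphimu : IsLeast {y : ℝ | ∃ S : Finset V,
        μ * vol Finset.univ ≤ vol S ∧ vol S ≤ (1 - μ) * vol Finset.univ ∧ y = phi S} phimu)
    (n : ℕ) (hn : n = Fintype.card V) (e : Fin n ≃ V)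
    (g : V → ℝ)
    (hg_sum : (∑ v, d v * g v) = 0)
    (hg_norm : QD g = 1)
    (hg_bounds : ∀ v, Real.sqrt (μ / ((1 - μ) * vol Finset.univ)) ≤ |g v| ∧
        |g v| ≤ Real.sqrt ((1 - μ) / (μ * vol Finset.univ)))
    (hg_sorted : ∀ i j : Fin n, i ≤ j → g (e j) ≤ g (e i))
    (S : ℕ → Finset V)
    (hS : ∀ j : ℕ, S j = (Finset.univ.filter fun i : Fin n => (i : ℕ) < j).image e)
    (h : ℕ) (hh_le : h ≤ n)
    (hh1 : vol (S h) ≤ vol Finset.univ / 2)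
    (hh2 : ∀ j : ℕ, j ≤ n → vol (S j) ≤ vol Finset.univ / 2 → j ≤ h)
    (z : ℕ) (hz_le : z ≤ n)
    (hz1 : ∀ i : Fin n, (i : ℕ) < z → 0 < g (e i))
    (hz2 : ∀ i : Fin n, z ≤ (i : ℕ) → g (e i) ≤ 0)
    (hzh : z ≤ h) :
    QL (fun v => max (g v) 0) / QD (fun v => max (g v) 0) ≥
      (1/2) * ((μ^2 / (1 - μ)^2) * phimu + ((1 - 2*μ) / (1 - μ)^2) * phi0)^2 := by
  have hV0 : 0 < vol Finset.univ := by
    rw [hvol]; exact Finset.sum_pos (fun v _ => hd_pos v) Finset.univ_nonempty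
  have hμ1 : μ < 1 := lt_of_le_of_lt hμhalf (by norm_num)
  have h1μ : 0 < 1 - μ := by linarith
  set m : ℝ := Real.sqrt (μ / ((1 - μ) * vol Finset.univ)) with hmdef
  set M : ℝ := Real.sqrt ((1 - μ) / (μ * vol Finset.univ)) with hMdef
  have hm2 : m ^ 2 = μ / ((1 - μ) * vol Finset.univ) := Real.sq_sqrt (by positivity)
  have hM2 : M ^ 2 = (1 - μ) / (μ * vol Finset.univ) := Real.sq_sqrt (by positivity)
  have hmpos : 0 < m := Real.sqrt_pos.mpr (by positivity)
  have hMpos : 0 < M := Real.sqrt_pos.mpr (by positivity)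
  clear_value m M
  set gp : V → ℝ := fun v => max (g v) 0 with hgpdef
  set F : ℕ → ℝ := fun k => if hk : k < n then max (g (e ⟨k, hk⟩)) 0 else 0 with hFdef
  set D : ℕ → ℝ := fun k => if hk : k < n then d (e ⟨k, hk⟩) else 0 with hDdef
  set W : ℕ → ℕ → ℝ := fun i j =>
    if hi : i < n then if hj : j < n then w (e ⟨i, hi⟩) (e ⟨j, hj⟩) else 0 else 0 with hWdef
  have hgpval : ∀ v, gp v = max (g v) 0 := fun v => by rw [hgpdef]
  have hFval : ∀ i : Fin n, F (i : ℕ) = max (g (e i)) 0 := by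
    intro i; simp [hFdef, i.isLt]
  have hDval : ∀ i : Fin n, D (i : ℕ) = d (e i) := by
    intro i; simp [hDdef, i.isLt]
  have hWval : ∀ i j : Fin n, W (i : ℕ) (j : ℕ) = w (e i) (e j) := by
    intro i j; simp [hWdef, i.isLt, j.isLt]
  have hFnonneg : ∀ k, 0 ≤ F k := by
    intro k; by_cases hk : k < n
    · simp [hFdef, hk]
    · simp [hFdef, hk]
  have hFanti : ∀ j k : ℕ, j ≤ k → F k ≤ F j := by
    intro j k hjk
    by_cases hk : k < n
    · have hj : j < n := lt_of_le_of_lt hjk hk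
      simp only [hFdef, dif_pos hk, dif_pos hj]
      exact max_le_max (hg_sorted ⟨j, hj⟩ ⟨k, hk⟩ hjk) le_rfl
    · simp only [hFdef, dif_neg hk]
      exact hFnonneg j
  have hFz0 : ∀ k, z ≤ k → F k = 0 := by
    intro k hk
    by_cases hkn : k < n
    · simp only [hFdef, dif_pos hkn]
      exact max_eq_right (hz2 ⟨k, hkn⟩ hk)
    · simp [hFdef, hkn]
  have hFpos : ∀ k, k < z → 0 < F k := by
    intro k hk
    have hkn : k < n := lt_of_lt_of_le hk hz_le
    simp only [hFdef, dif_pos hkn]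
    exact lt_max_of_lt_left (hz1 ⟨k, hkn⟩ hk)
  have hFm : ∀ k, k < z → m ≤ F k := by
    intro k hk
    have hkn : k < n := lt_of_lt_of_le hk hz_le
    have hpos := hz1 ⟨k, hkn⟩ hk
    have := (hg_bounds (e ⟨k, hkn⟩)).1
    rw [abs_of_pos hpos] at this
    simp only [hFdef, dif_pos hkn]
    exact le_max_of_le_left this
  have hFleM : ∀ k, F k ≤ M := by
    intro k
    by_cases hk : k < n
    · simp only [hFdef, dif_pos hk]
      exact max_le (le_trans (le_abs_self _) (hg_bounds (e ⟨k, hk⟩)).2)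
        (le_trans (abs_nonneg _) (hg_bounds (e ⟨k, hk⟩)).2)
    · simp only [hFdef, dif_neg hk]; exact hMpos.le
  have hDnn : ∀ k, 0 ≤ D k := by
    intro k; by_cases hk : k < n
    · simp [hDdef, hk, (hd_pos _).le]
    · simp [hDdef, hk]
  have hDpos : ∀ k, k < n → 0 < D k := by
    intro k hk; simp [hDdef, hk, hd_pos]
  have hWnn : ∀ i j, 0 ≤ W i j := by
    intro i j
    by_cases hi : i < n
    · by_cases hj : j < n
      · simp [hWdef, hi, hj, hw_nonneg]
      · simp [hWdef, hi, hj]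
    · simp [hWdef, hi]
  have hWsymm : ∀ i j, W i j = W j i := by
    intro i j
    by_cases hi : i < n <;> by_cases hj : j < n <;> simp [hWdef, hi, hj, hw_symm]
  have hWrow : ∀ i, i < n → ∑ j ∈ range n, W i j = D i := by
    intro i hi
    rw [← Fin.sum_univ_eq_sum_range (fun j => W i j) n]
    have : ∀ j : Fin n, W i (j : ℕ) = w (e ⟨i, hi⟩) (e j) := fun j => hWval ⟨i, hi⟩ j
    rw [Fintype.sum_congr _ _ this, Equiv.sum_comp e (w (e ⟨i, hi⟩)), ← hd]
    simp [hDdef, hi]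
  clear_value gp F D W
  -- membership in sweep sets
  have hmemS : ∀ (t : ℕ) (i : Fin n), e i ∈ S t ↔ (i : ℕ) < t := by
    intro t i
    rw [hS]
    simp only [Finset.mem_image, Finset.mem_filter, Finset.mem_univ, true_and]
    constructor
    · rintro ⟨j, hj, hje⟩
      rwa [← e.injective hje]
    · intro hi; exact ⟨i, hi, rfl⟩
  have hsum_mem : ∀ (T : Finset V) (f : V → ℝ),
      ∑ u ∈ T, f u = ∑ u : V, if u ∈ T then f u else 0 := by
    intro T f; rw [Finset.sum_ite_mem, Finset.univ_inter]
  have hvolS : ∀ t, vol (S t) = ∑ k ∈ range n, if k < t then D k else 0 := by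
    intro t
    rw [hvol, hS, Finset.sum_image (fun a _ b _ hab => e.injective hab), Finset.sum_filter,
      ← Fin.sum_univ_eq_sum_range (fun k => if k < t then D k else 0) n]
    exact Fintype.sum_congr _ _ (fun i => by by_cases hi : (i : ℕ) < t <;> simp [hi, hDval i])
  have hcutS : ∀ t, cut (S t) =
      ∑ i ∈ range n, ∑ j ∈ range n, if i < t ∧ ¬ j < t then W i j else 0 := by
    intro t
    rw [hcut, hsum_mem]
    have step1 : ∀ u : V, (if u ∈ S t then (∑ v ∈ (S t)ᶜ, w u v) else 0)
        = ∑ v : V, if u ∈ S t ∧ ¬ v ∈ S t then w u v else 0 := by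
      intro u
      by_cases hu : u ∈ S t
      · rw [if_pos hu, hsum_mem]
        exact Finset.sum_congr rfl fun v _ => by simp [hu, Finset.mem_compl]
      · rw [if_neg hu]
        simp [hu]
    rw [Fintype.sum_congr _ _ step1]
    rw [← Equiv.sum_comp e (fun u => ∑ v : V, if u ∈ S t ∧ ¬ v ∈ S t then w u v else 0),
      ← Fin.sum_univ_eq_sum_range
        (fun i => ∑ j ∈ range n, if i < t ∧ ¬ j < t then W i j else 0) n]
    refine Fintype.sum_congr _ _ (fun i => ?_)
    rw [← Equiv.sum_comp e (fun v => if e i ∈ S t ∧ ¬ v ∈ S t then w (e i) v else 0),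
      ← Fin.sum_univ_eq_sum_range (fun j => if (i:ℕ) < t ∧ ¬ j < t then W (i:ℕ) j else 0) n]
    refine Fintype.sum_congr _ _ (fun j => ?_)
    rw [hWval i j]
    by_cases h1 : (i : ℕ) < t <;> by_cases h2 : (j : ℕ) < t <;>
      simp [hmemS t i, hmemS t j, h1, h2]
  have hQDgp : QD gp = ∑ k ∈ range n, D k * F k ^ 2 := by
    rw [hQD, ← Equiv.sum_comp e (fun v => d v * gp v ^ 2),
      ← Fin.sum_univ_eq_sum_range (fun k => D k * F k ^ 2) n]
    exact Fintype.sum_congr _ _ (fun i => by rw [hDval i, hFval i, hgpval])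
  have hQLgp : QL gp = (1/2) * ∑ i ∈ range n, ∑ j ∈ range n, W i j * (F i - F j) ^ 2 := by
    rw [hQL]
    congr 1
    rw [← Equiv.sum_comp e (fun u => ∑ v : V, w u v * (gp u - gp v) ^ 2),
      ← Fin.sum_univ_eq_sum_range (fun i => ∑ j ∈ range n, W i j * (F i - F j) ^ 2) n]
    refine Fintype.sum_congr _ _ (fun i => ?_)
    rw [← Equiv.sum_comp e (fun v => w (e i) v * (gp (e i) - gp v) ^ 2),
      ← Fin.sum_univ_eq_sum_range (fun j => W (i:ℕ) j * (F (i:ℕ) - F j) ^ 2) n]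
    exact Fintype.sum_congr _ _ (fun j => by rw [hWval i j, hFval i, hFval j, hgpval, hgpval])
  -- basic volume facts
  have hvolnn : ∀ T : Finset V, 0 ≤ vol T := by
    intro T; rw [hvol]; exact Finset.sum_nonneg fun v _ => (hd_pos v).le
  have hvolpos : ∀ T : Finset V, T.Nonempty → 0 < vol T := by
    intro T hT; rw [hvol]; exact Finset.sum_pos (fun v _ => hd_pos v) hT
  have hvolcompl : ∀ T : Finset V, vol Tᶜ = vol Finset.univ - vol T := by
    intro T
    have := Finset.sum_compl_add_sum T d
    rw [hvol, hvol, hvol]; linarith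
  have hcutnn : ∀ T : Finset V, 0 ≤ cut T := by
    intro T; rw [hcut]
    exact Finset.sum_nonneg fun u _ => Finset.sum_nonneg fun v _ => hw_nonneg u v
  have hvolmono : ∀ a b : ℕ, a ≤ b → vol (S a) ≤ vol (S b) := by
    intro a b hab
    rw [hvolS, hvolS]
    refine Finset.sum_le_sum fun k _ => ?_
    by_cases hk : k < a
    · simp [hk, lt_of_lt_of_le hk hab]
    · by_cases hk2 : k < b <;> simp [hk, hk2, hDnn k]
  have hvol_succ : ∀ k, k < n → vol (S (k+1)) = vol (S k) + D k := by
    intro k hk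
    rw [hvolS, hvolS]
    have : ∀ i ∈ range n, (if i < k + 1 then D i else 0)
        = (if i < k then D i else 0) + (if i = k then D i else 0) := by
      intro i _
      rcases lt_trichotomy i k with h1 | h1 | h1
      · rw [if_pos (by omega : i < k + 1), if_pos h1, if_neg (by omega : ¬ i = k), add_zero]
      · subst h1
        rw [if_pos (by omega : i < i + 1), if_neg (by omega : ¬ i < i), if_pos rfl, zero_add]
      · rw [if_neg (by omega : ¬ i < k + 1), if_neg (by omega : ¬ i < k),
          if_neg (by omega : ¬ i = k), add_zero]
    rw [Finset.sum_congr rfl this, Finset.sum_add_distrib, Finset.sum_ite_eq' (range n) k D,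
      if_pos (Finset.mem_range.mpr hk)]
  -- z is positive
  have hz_pos : 0 < z := by
    by_contra h0
    push_neg at h0
    interval_cases z
    have hneg : ∀ v : V, d v * g v < 0 := by
      intro v
      have h1 : g (e (e.symm v)) ≤ 0 := hz2 (e.symm v) (Nat.zero_le _)
      rw [e.apply_symm_apply] at h1
      have h2 := (hg_bounds v).1
      have hgne : g v ≠ 0 := by
        intro hg0; rw [hg0, abs_zero] at h2; exact absurd h2 (not_le.mpr hmpos)
      exact mul_neg_of_pos_of_neg (hd_pos v) (lt_of_le_of_ne h1 hgne)
    have : (∑ v, d v * g v) < 0 :=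
      Finset.sum_neg (fun v _ => hneg v) Finset.univ_nonempty
    linarith [hg_sum]
  have hn_pos : 0 < n := lt_of_lt_of_le hz_pos hz_le
  have hSne : ∀ t, 0 < t → (S t).Nonempty := by
    intro t ht
    exact ⟨e ⟨0, hn_pos⟩, (hmemS t ⟨0, hn_pos⟩).mpr ht⟩
  -- conductance facts
  have hphi0nn : 0 ≤ phi0 := by
    obtain ⟨T, hT1, hT2, hTeq⟩ := hphi0.1
    rw [hTeq, hphi]
    exact div_nonneg (hcutnn T) (le_min (hvolnn T) (hvolnn Tᶜ))
  have hphile : ∀ T : Finset V, T.Nonempty → T ≠ Finset.univ → phi0 ≤ phi T :=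
    fun T h1 h2 => hphi0.2 ⟨T, h1, h2, rfl⟩
  have hcut_lb : ∀ t, 0 < t → t ≤ h → phi0 * vol (S t) ≤ cut (S t) := by
    intro t ht0 hth
    have hvt : vol (S t) ≤ vol Finset.univ / 2 := le_trans (hvolmono t h hth) hh1
    have hne : (S t).Nonempty := hSne t ht0
    have hvpos : 0 < vol (S t) := hvolpos _ hne
    have hneq : S t ≠ Finset.univ := by
      intro hEq; rw [hEq] at hvt; linarith
    have hmin : min (vol (S t)) (vol (S t)ᶜ) = vol (S t) := by
      rw [hvolcompl]; exact min_eq_left (by linarith)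
    have := hphile (S t) hne hneq
    rw [hphi, hmin] at this
    exact (le_div_iff₀ hvpos).mp this
  -- relation between m and M
  have hMm : μ * M = (1 - μ) * m := by
    have e1 : μ * M = Real.sqrt (μ^2 * ((1 - μ) / (μ * vol Finset.univ))) := by
      rw [Real.sqrt_mul (sq_nonneg μ), Real.sqrt_sq hμ0.le, hMdef]
    have e2 : (1 - μ) * m = Real.sqrt ((1 - μ)^2 * (μ / ((1 - μ) * vol Finset.univ))) := by
      rw [Real.sqrt_mul (sq_nonneg (1 - μ)), Real.sqrt_sq h1μ.le, hmdef]
    rw [e1, e2]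
    congr 1
    field_simp
  -- volume of S z in terms of the positive vertices
  have hvolz_eq : vol (S z) =
      ∑ i ∈ Finset.univ.filter (fun i : Fin n => (i : ℕ) < z), d (e i) := by
    rw [hvol, hS z, Finset.sum_image (fun a _ b _ hab => e.injective hab)]
  have hvoluniv : vol Finset.univ = ∑ i : Fin n, d (e i) := by
    rw [hvol, ← Equiv.sum_comp e d]
  -- lower bound on vol (S z)
  have hvolz_lb : μ * vol Finset.univ ≤ vol (S z) := by
    have hsplit := Finset.sum_filter_add_sum_filter_not Finset.univ
      (fun i : Fin n => (i : ℕ) < z) (fun i => d (e i) * g (e i))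
    have hsum0 : (∑ i : Fin n, d (e i) * g (e i)) = 0 := by
      rw [Equiv.sum_comp e (fun v => d v * g v)]; exact hg_sum
    have hpos_bd : (∑ i ∈ Finset.univ.filter (fun i : Fin n => (i : ℕ) < z),
        d (e i) * g (e i)) ≤ M * vol (S z) := by
      rw [hvolz_eq, Finset.mul_sum]
      refine Finset.sum_le_sum fun i hi => ?_
      have hgi : g (e i) ≤ M := le_trans (le_abs_self _) (hg_bounds (e i)).2
      have := mul_le_mul_of_nonneg_left hgi (hd_pos (e i)).le
      linarith [this]
    have hneg_bd : (∑ i ∈ Finset.univ.filter (fun i : Fin n => ¬ (i : ℕ) < z),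
        d (e i) * g (e i)) ≤ -m * (vol Finset.univ - vol (S z)) := by
      have hveq : vol Finset.univ - vol (S z)
          = ∑ i ∈ Finset.univ.filter (fun i : Fin n => ¬ (i : ℕ) < z), d (e i) := by
        have := Finset.sum_filter_add_sum_filter_not Finset.univ
          (fun i : Fin n => (i : ℕ) < z) (fun i => d (e i))
        rw [hvoluniv, hvolz_eq]; linarith
      rw [hveq, neg_mul, Finset.mul_sum, ← Finset.sum_neg_distrib]
      refine Finset.sum_le_sum fun i hi => ?_
      have hiz : z ≤ (i : ℕ) := by
        have := Finset.mem_filter.mp hi; omega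
      have hgle : g (e i) ≤ 0 := hz2 i hiz
      have habs := (hg_bounds (e i)).1
      rw [abs_of_nonpos hgle] at habs
      have hgm : g (e i) ≤ -m := by linarith
      have := mul_le_mul_of_nonneg_left hgm (hd_pos (e i)).le
      linarith [this]
    have h1 : m * (vol Finset.univ - vol (S z)) ≤ M * vol (S z) := by
      have := hsplit
      rw [hsum0] at this
      linarith [hpos_bd, hneg_bd]
    have h2 : μ * (m * (vol Finset.univ - vol (S z))) ≤ μ * (M * vol (S z)) :=
      mul_le_mul_of_nonneg_left h1 hμ0.le
    have h3 : μ * (M * vol (S z)) = (1 - μ) * m * vol (S z) := by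
      rw [← mul_assoc, hMm]
    rw [h3] at h2
    have h4 : μ * vol Finset.univ * m ≤ vol (S z) * m := by nlinarith [h2]
    exact le_of_mul_le_mul_right (by linarith) hmpos
  -- QD gp ≤ M^2 * vol (S z)
  have hQD_le : QD gp ≤ M ^ 2 * vol (S z) := by
    rw [hQDgp, hvolS z, Finset.mul_sum]
    refine Finset.sum_le_sum fun k hk => ?_
    by_cases hkz : k < z
    · rw [if_pos hkz]
      have h1 : F k ^ 2 ≤ M ^ 2 := pow_le_pow_left₀ (hFnonneg k) (hFleM k) 2
      have := mul_le_mul_of_nonneg_left h1 (hDnn k)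
      linarith [this]
    · rw [if_neg hkz, hFz0 k (by omega)]
      simp
  have hQD_pos : 0 < QD gp := by
    rw [hQDgp]
    refine Finset.sum_pos' (fun k _ => mul_nonneg (hDnn k) (sq_nonneg _)) ?_
    exact ⟨0, Finset.mem_range.mpr hn_pos,
      mul_pos (hDpos 0 hn_pos) (pow_pos (hFpos 0 hz_pos) 2)⟩
  -- Abel summation identity
  have hAbel : ∑ k ∈ range z, (F k ^ 2 - F (k+1) ^ 2) * vol (S (k+1)) = QD gp := by
    have key : ∀ k ∈ range z, (F k ^ 2 - F (k+1) ^ 2) * vol (S (k+1))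
        = F k ^ 2 * D k + (F k ^ 2 * vol (S k) - F (k+1) ^ 2 * vol (S (k+1))) := by
      intro k hk
      rw [hvol_succ k (lt_of_lt_of_le (Finset.mem_range.mp hk) hz_le)]
      ring
    rw [Finset.sum_congr rfl key, Finset.sum_add_distrib,
      Finset.sum_range_sub' (fun k => F k ^ 2 * vol (S k)) z]
    have hS0 : vol (S 0) = 0 := by rw [hvolS]; simp
    have hFz : F z = 0 := hFz0 z le_rfl
    have hext : ∑ k ∈ range z, F k ^ 2 * D k = ∑ k ∈ range n, F k ^ 2 * D k := by
      refine Finset.sum_subset (Finset.range_subset_range.mpr hz_le) fun k _ hk => ?_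
      rw [hFz0 k (by simp at hk ⊢; omega)]
      ring
    have hcomm : ∑ k ∈ range n, F k ^ 2 * D k = ∑ k ∈ range n, D k * F k ^ 2 :=
      Finset.sum_congr rfl fun k _ => mul_comm _ _
    rw [hS0, hFz, hQDgp, hext, hcomm]
    ring
  have hphimu_ge : phi0 ≤ phimu := by
    obtain ⟨T, hT1, hT2, hTeq⟩ := hphimu.1
    have hTpos : 0 < vol T := lt_of_lt_of_le (mul_pos hμ0 hV0) hT1
    have hTne : T.Nonempty := by
      rcases T.eq_empty_or_nonempty with rfl | hne
      · rw [hvol, Finset.sum_empty] at hTpos; linarith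
      · exact hne
    have hTuniv : T ≠ Finset.univ := by
      intro hEq; rw [hEq] at hT2
      have := mul_pos hμ0 hV0; linarith
    rw [hTeq]; exact hphile T hTne hTuniv
  set E : ℝ := ∑ k ∈ range z, (F k ^ 2 - F (k+1) ^ 2) * cut (S (k+1)) with hEdef
  clear_value E
  have hE_lb2 : (phi0 + (phimu - phi0) * (μ^2/(1-μ)^2)) * QD gp ≤ E := by
    obtain ⟨y, hy⟩ : ∃ y, z = y + 1 := ⟨z - 1, by omega⟩
    have hvhalf : vol (S z) ≤ vol Finset.univ / 2 := le_trans (hvolmono z h hzh) hh1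
    have hv2 : vol (S z) ≤ (1 - μ) * vol Finset.univ := by
      have := mul_le_mul_of_nonneg_right (show (1/2:ℝ) ≤ 1 - μ by linarith) hV0.le
      linarith
    have hphimu_le : phimu ≤ phi (S z) := hphimu.2 ⟨S z, hvolz_lb, hv2, rfl⟩
    have hvpos : 0 < vol (S z) := hvolpos _ (hSne z hz_pos)
    have hmin : min (vol (S z)) (vol (S z)ᶜ) = vol (S z) := by
      rw [hvolcompl]; exact min_eq_left (by linarith)
    rw [hphi, hmin] at hphimu_le
    have hcutz : phimu * vol (S z) ≤ cut (S z) := (le_div_iff₀ hvpos).mp hphimu_le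
    have hFz : F z = 0 := hFz0 z le_rfl
    have hEsplit : E = (∑ k ∈ range y, (F k ^ 2 - F (k+1) ^ 2) * cut (S (k+1)))
        + F y ^ 2 * cut (S z) := by
      rw [hEdef, hy, Finset.sum_range_succ, ← hy, hFz]
      ring
    have hQDsplit : QD gp = (∑ k ∈ range y, (F k ^ 2 - F (k+1) ^ 2) * vol (S (k+1)))
        + F y ^ 2 * vol (S z) := by
      rw [← hAbel, hy, Finset.sum_range_succ, ← hy, hFz]
      ring
    have hterm : ∀ k ∈ range y, phi0 * ((F k ^ 2 - F (k+1) ^ 2) * vol (S (k+1)))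
        ≤ (F k ^ 2 - F (k+1) ^ 2) * cut (S (k+1)) := by
      intro k hk
      have hk' : k < y := Finset.mem_range.mp hk
      have hc := hcut_lb (k+1) (Nat.succ_pos k) (by omega)
      have hΔ : 0 ≤ F k ^ 2 - F (k+1) ^ 2 :=
        sub_nonneg.mpr (pow_le_pow_left₀ (hFnonneg (k+1)) (hFanti k (k+1) (Nat.le_succ k)) 2)
      calc phi0 * ((F k ^ 2 - F (k+1) ^ 2) * vol (S (k+1)))
          = (F k ^ 2 - F (k+1) ^ 2) * (phi0 * vol (S (k+1))) := by ring
        _ ≤ _ := mul_le_mul_of_nonneg_left hc hΔ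
    have hsum1 : phi0 * (∑ k ∈ range y, (F k ^ 2 - F (k+1) ^ 2) * vol (S (k+1)))
        ≤ ∑ k ∈ range y, (F k ^ 2 - F (k+1) ^ 2) * cut (S (k+1)) := by
      rw [Finset.mul_sum]; exact Finset.sum_le_sum hterm
    have hlast : F y ^ 2 * (phimu * vol (S z)) ≤ F y ^ 2 * cut (S z) :=
      mul_le_mul_of_nonneg_left hcutz (sq_nonneg _)
    have hFy2 : m ^ 2 ≤ F y ^ 2 := pow_le_pow_left₀ hmpos.le (hFm y (by omega)) 2
    have ha : (μ^2/(1-μ)^2) * M ^ 2 = m ^ 2 := by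
      rw [hm2, hM2]; field_simp
    have hkey : (μ^2/(1-μ)^2) * QD gp ≤ m ^ 2 * vol (S z) := by
      calc (μ^2/(1-μ)^2) * QD gp ≤ (μ^2/(1-μ)^2) * (M ^ 2 * vol (S z)) :=
            mul_le_mul_of_nonneg_left hQD_le (by positivity)
        _ = m ^ 2 * vol (S z) := by rw [← mul_assoc, ha]
    have hdnn : 0 ≤ phimu - phi0 := sub_nonneg.mpr hphimu_ge
    have t1 : (phimu - phi0) * ((μ^2/(1-μ)^2) * QD gp)
        ≤ (phimu - phi0) * (m ^ 2 * vol (S z)) := mul_le_mul_of_nonneg_left hkey hdnn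
    have t2 : (phimu - phi0) * (m ^ 2 * vol (S z))
        ≤ (phimu - phi0) * (F y ^ 2 * vol (S z)) :=
      mul_le_mul_of_nonneg_left (mul_le_mul_of_nonneg_right hFy2 (hvolnn _)) hdnn
    have hq : phi0 * QD gp = phi0 * (∑ k ∈ range y, (F k ^ 2 - F (k+1) ^ 2) * vol (S (k+1)))
        + phi0 * (F y ^ 2 * vol (S z)) := by rw [hQDsplit]; ring
    linarith [hsum1, hlast, t1, t2, hq, hEsplit]
  -- E as a sum over pairs
  have hinner : ∀ i j : ℕ,
      (∑ k ∈ range z, if i ≤ k ∧ k < j then F k ^ 2 - F (k+1) ^ 2 else 0)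
        = if i < j then F i ^ 2 - F j ^ 2 else 0 := by
    intro i j
    rw [← Finset.sum_filter]
    have hfil : (range z).filter (fun k => i ≤ k ∧ k < j) = Finset.Ico i (min j z) := by
      ext k
      simp only [Finset.mem_filter, Finset.mem_range, Finset.mem_Ico, lt_min_iff]
      omega
    rw [hfil]
    by_cases hij : i < j
    · rw [if_pos hij]
      by_cases hiz : i < z
      · rw [telescope_Ico (fun k => F k ^ 2) (by omega : i ≤ min j z)]
        rcases le_total j z with hjz | hjz
        · rw [min_eq_left hjz]
        · rw [min_eq_right hjz, hFz0 z le_rfl, hFz0 j hjz]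
      · rw [Finset.Ico_eq_empty (by omega), Finset.sum_empty,
          hFz0 i (by omega), hFz0 j (by omega)]
        ring
    · rw [if_neg hij, Finset.Ico_eq_empty (by omega), Finset.sum_empty]
  have hE_pairs : E = ∑ i ∈ range n, ∑ j ∈ range n,
      W i j * (if i < j then F i ^ 2 - F j ^ 2 else 0) := by
    rw [hEdef]
    have step1 : ∀ k ∈ range z, (F k ^ 2 - F (k+1) ^ 2) * cut (S (k+1))
        = ∑ i ∈ range n, ∑ j ∈ range n,
            (if i ≤ k ∧ k < j then (F k ^ 2 - F (k+1) ^ 2) * W i j else 0) := by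
      intro k _
      rw [hcutS (k+1), Finset.mul_sum]
      refine Finset.sum_congr rfl fun i _ => ?_
      rw [Finset.mul_sum]
      refine Finset.sum_congr rfl fun j _ => ?_
      rw [mul_ite, mul_zero]
      exact if_congr (by omega) rfl rfl
    rw [Finset.sum_congr rfl step1, Finset.sum_comm]
    refine Finset.sum_congr rfl fun i _ => ?_
    rw [Finset.sum_comm]
    refine Finset.sum_congr rfl fun j _ => ?_
    have : ∀ k ∈ range z, (if i ≤ k ∧ k < j then (F k ^ 2 - F (k+1) ^ 2) * W i j else 0)
        = (if i ≤ k ∧ k < j then (F k ^ 2 - F (k+1) ^ 2) else 0) * W i j := by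
      intro k _; rw [ite_mul, zero_mul]
    rw [Finset.sum_congr rfl this, ← Finset.sum_mul, hinner i j, mul_comm]
  have hE2 : E = ∑ i ∈ range n, ∑ j ∈ range n,
      W i j * (if j < i then F j ^ 2 - F i ^ 2 else 0) := by
    rw [hE_pairs, Finset.sum_comm]
    exact Finset.sum_congr rfl fun i _ => Finset.sum_congr rfl fun j _ => by rw [hWsymm j i]
  have hsum2E : 2 * E ≤ ∑ i ∈ range n, ∑ j ∈ range n,
      W i j * (|F i - F j| * (F i + F j)) := by
    have hsplit : 2 * E = ∑ i ∈ range n, ∑ j ∈ range n,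
        (W i j * (if i < j then F i ^ 2 - F j ^ 2 else 0)
          + W i j * (if j < i then F j ^ 2 - F i ^ 2 else 0)) := by
      rw [Finset.sum_congr rfl fun i (_ : i ∈ range n) => Finset.sum_add_distrib,
        Finset.sum_add_distrib, ← hE_pairs, ← hE2]
      ring
    rw [hsplit]
    refine Finset.sum_le_sum fun i _ => Finset.sum_le_sum fun j _ => ?_
    rcases lt_trichotomy i j with hij | hij | hij
    · rw [if_pos hij, if_neg (by omega), abs_of_nonneg (sub_nonneg.mpr (hFanti i j hij.le))]
      have heq : (F i - F j) * (F i + F j) = F i ^ 2 - F j ^ 2 := by ring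
      rw [heq]
      linarith
    · subst hij
      simp
    · rw [if_neg (by omega), if_pos hij, abs_of_nonpos (sub_nonpos.mpr (hFanti j i hij.le))]
      have heq : -(F i - F j) * (F i + F j) = F j ^ 2 - F i ^ 2 := by ring
      rw [heq]
      linarith
  -- Cauchy-Schwarz
  have hCS2 : (∑ i ∈ range n, ∑ j ∈ range n, W i j * (|F i - F j| * (F i + F j))) ^ 2
      ≤ (∑ i ∈ range n, ∑ j ∈ range n, W i j * (F i - F j) ^ 2)
        * (∑ i ∈ range n, ∑ j ∈ range n, W i j * (F i + F j) ^ 2) := by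
    have hcs := Finset.sum_mul_sq_le_sq_mul_sq ((range n) ×ˢ (range n))
      (fun p => Real.sqrt (W p.1 p.2) * |F p.1 - F p.2|)
      (fun p => Real.sqrt (W p.1 p.2) * (F p.1 + F p.2))
    have e1 : ∑ p ∈ (range n) ×ˢ (range n),
        (Real.sqrt (W p.1 p.2) * |F p.1 - F p.2|) * (Real.sqrt (W p.1 p.2) * (F p.1 + F p.2))
        = ∑ i ∈ range n, ∑ j ∈ range n, W i j * (|F i - F j| * (F i + F j)) := by
      rw [← Finset.sum_product']
      refine Finset.sum_congr rfl fun p _ => ?_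
      have : Real.sqrt (W p.1 p.2) * Real.sqrt (W p.1 p.2) = W p.1 p.2 :=
        Real.mul_self_sqrt (hWnn p.1 p.2)
      calc (Real.sqrt (W p.1 p.2) * |F p.1 - F p.2|) * (Real.sqrt (W p.1 p.2) * (F p.1 + F p.2))
          = (Real.sqrt (W p.1 p.2) * Real.sqrt (W p.1 p.2)) * (|F p.1 - F p.2| * (F p.1 + F p.2)) := by
            ring
        _ = W p.1 p.2 * (|F p.1 - F p.2| * (F p.1 + F p.2)) := by rw [this]
    have e2 : ∑ p ∈ (range n) ×ˢ (range n), (Real.sqrt (W p.1 p.2) * |F p.1 - F p.2|) ^ 2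
        = ∑ i ∈ range n, ∑ j ∈ range n, W i j * (F i - F j) ^ 2 := by
      rw [← Finset.sum_product']
      refine Finset.sum_congr rfl fun p _ => ?_
      rw [mul_pow, Real.sq_sqrt (hWnn p.1 p.2), sq_abs]
    have e3 : ∑ p ∈ (range n) ×ˢ (range n), (Real.sqrt (W p.1 p.2) * (F p.1 + F p.2)) ^ 2
        = ∑ i ∈ range n, ∑ j ∈ range n, W i j * (F i + F j) ^ 2 := by
      rw [← Finset.sum_product']
      refine Finset.sum_congr rfl fun p _ => ?_
      rw [mul_pow, Real.sq_sqrt (hWnn p.1 p.2)]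
    rw [e1, e2, e3] at hcs
    exact hcs
  have hsq1 : ∑ i ∈ range n, ∑ j ∈ range n, W i j * (F i - F j) ^ 2 = 2 * QL gp := by
    rw [hQLgp]; ring
  have hsq2 : ∑ i ∈ range n, ∑ j ∈ range n, W i j * (F i + F j) ^ 2 ≤ 4 * QD gp := by
    have hbd : ∀ i ∈ range n, ∀ j ∈ range n,
        W i j * (F i + F j) ^ 2 ≤ W i j * (2 * F i ^ 2) + W i j * (2 * F j ^ 2) := by
      intro i _ j _
      have key : (F i + F j) ^ 2 ≤ 2 * F i ^ 2 + 2 * F j ^ 2 := by nlinarith [sq_nonneg (F i - F j)]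
      have := mul_le_mul_of_nonneg_left key (hWnn i j)
      linarith
    have hA : ∑ i ∈ range n, ∑ j ∈ range n, W i j * (2 * F i ^ 2)
        = 2 * ∑ k ∈ range n, D k * F k ^ 2 := by
      rw [Finset.mul_sum]
      refine Finset.sum_congr rfl fun i hi => ?_
      rw [← Finset.sum_mul, hWrow i (Finset.mem_range.mp hi)]
      ring
    have hB : ∑ i ∈ range n, ∑ j ∈ range n, W i j * (2 * F j ^ 2)
        = 2 * ∑ k ∈ range n, D k * F k ^ 2 := by
      rw [Finset.sum_comm, Finset.mul_sum]
      refine Finset.sum_congr rfl fun j hj => ?_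
      have hcol : ∑ i ∈ range n, W i j = D j := by
        rw [Finset.sum_congr rfl fun i (_ : i ∈ range n) => hWsymm i j,
          hWrow j (Finset.mem_range.mp hj)]
      rw [← Finset.sum_mul, hcol]
      ring
    calc ∑ i ∈ range n, ∑ j ∈ range n, W i j * (F i + F j) ^ 2
        ≤ ∑ i ∈ range n, ∑ j ∈ range n,
            (W i j * (2 * F i ^ 2) + W i j * (2 * F j ^ 2)) :=
          Finset.sum_le_sum fun i hi => Finset.sum_le_sum fun j hj => hbd i hi j hj
      _ = (∑ i ∈ range n, ∑ j ∈ range n, W i j * (2 * F i ^ 2))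
          + ∑ i ∈ range n, ∑ j ∈ range n, W i j * (2 * F j ^ 2) := by
          rw [Finset.sum_congr rfl fun i (_ : i ∈ range n) => Finset.sum_add_distrib,
            Finset.sum_add_distrib]
      _ = 4 * QD gp := by rw [hA, hB, hQDgp]; ring
  -- final assembly
  have hQLnn : 0 ≤ QL gp := by
    rw [hQLgp]
    refine mul_nonneg (by norm_num) (Finset.sum_nonneg fun i _ => Finset.sum_nonneg fun j _ =>
      mul_nonneg (hWnn i j) (sq_nonneg _))
  have hCnn : 0 ≤ phi0 + (phimu - phi0) * (μ^2/(1-μ)^2) :=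
    add_nonneg hphi0nn (mul_nonneg (sub_nonneg.mpr hphimu_ge) (by positivity))
  have hEnn : 0 ≤ E := le_trans (mul_nonneg hCnn hQD_pos.le) hE_lb2
  have hEsqle : (2 * E) ^ 2 ≤ (2 * QL gp) * (4 * QD gp) := by
    calc (2 * E) ^ 2 ≤ (∑ i ∈ range n, ∑ j ∈ range n,
          W i j * (|F i - F j| * (F i + F j))) ^ 2 := by
          have h2E : 0 ≤ 2 * E := by linarith
          exact pow_le_pow_left₀ h2E hsum2E 2
      _ ≤ (∑ i ∈ range n, ∑ j ∈ range n, W i j * (F i - F j) ^ 2)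
          * (∑ i ∈ range n, ∑ j ∈ range n, W i j * (F i + F j) ^ 2) := hCS2
      _ = (2 * QL gp) * (∑ i ∈ range n, ∑ j ∈ range n, W i j * (F i + F j) ^ 2) := by
          rw [hsq1]
      _ ≤ (2 * QL gp) * (4 * QD gp) :=
          mul_le_mul_of_nonneg_left hsq2 (by linarith)
  have hCQD : (phi0 + (phimu - phi0) * (μ^2/(1-μ)^2)) * QD gp ≤ E := hE_lb2
  have hsq : ((phi0 + (phimu - phi0) * (μ^2/(1-μ)^2)) * QD gp) ^ 2 ≤ E ^ 2 :=
    pow_le_pow_left₀ (mul_nonneg hCnn hQD_pos.le) hCQD 2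
  have hfinal : (phi0 + (phimu - phi0) * (μ^2/(1-μ)^2)) ^ 2 * QD gp * QD gp
      ≤ (2 * QL gp) * QD gp := by linarith [hsq, hEsqle]
  have hfinal2 : (phi0 + (phimu - phi0) * (μ^2/(1-μ)^2)) ^ 2 * QD gp ≤ 2 * QL gp :=
    le_of_mul_le_mul_right hfinal hQD_pos
  have hCeq : phi0 + (phimu - phi0) * (μ^2/(1-μ)^2)
      = μ^2 / (1 - μ)^2 * phimu + (1 - 2*μ) / (1 - μ)^2 * phi0 := by
    field_simp
    ring
  rw [ge_iff_le, le_div_iff₀ hQD_pos, ← hCeq]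
  linarith [hfinal2]
end
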